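/- arXiv:1412.1604 — 7 statements merged into one kernel-verified Lean document; each statement's English description precedes it below -/
import Mathlib

section
/- For every nonnegative integer l, the power series identity ∑_{j≥0} (x^j / (j! 2^j)) · ((2j+2l-1)!!/(2j-1)!!) = (∑_{j=0}^{l} (2l)!/((2l-2j)! j! 2^j) · x^{l-j}) · e^{x/2} holds. -/
open Nat Finset

noncomputable def cc (l j : ℕ) : ℝ :=
  ((2*l).factorial : ℝ) / (((2*l-2*j).factorial : ℝ) * (j.factorial : ℝ) * 2^j)

noncomputable def TT (l n j : ℕ) : ℝ :=
  if l - j ≤ n then cc l j / (((n-(l-j)).factorial : ℝ) * 2^(n-(l-j))) else 0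

noncomputable def AA (l n j : ℕ) : ℝ :=
  if l+1-j ≤ n ∧ j ≤ l then cc l j / (((n-(l+1-j)).factorial : ℝ) * 2^(n-(l+1-j))) else 0

noncomputable def BB (l n j : ℕ) : ℝ :=
  if l - j ≤ n then ((4*l-2*j+1 : ℕ) : ℝ) *
    (cc l j / (((n-(l-j)).factorial : ℝ) * 2^(n-(l-j)))) else 0

lemma fact_cast_ne (m : ℕ) : ((m.factorial : ℝ)) ≠ 0 :=
  Nat.cast_ne_zero.mpr m.factorial_ne_zero

lemma cc_zero (l : ℕ) : cc l 0 = 1 := by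
  simp only [cc, Nat.mul_zero, Nat.sub_zero, Nat.factorial_zero, Nat.cast_one, pow_zero,
    mul_one]
  exact div_self (fact_cast_ne _)

lemma cc_top (l : ℕ) : cc (l+1) (l+1) = ((2*l+1 : ℕ) : ℝ) * cc l l := by
  have f1 : ((2*(l+1)).factorial : ℝ) = (2*(l:ℝ)+2) * ((2*(l:ℝ)+1) * (2*l).factorial) := by
    rw [show 2*(l+1) = (2*l+1)+1 by omega, Nat.factorial_succ, Nat.factorial_succ]
    push_cast; ring
  have f3 : (((l+1)).factorial : ℝ) = ((l:ℝ)+1) * l.factorial := by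
    rw [Nat.factorial_succ]; push_cast; ring
  unfold cc
  rw [show 2*(l+1)-2*(l+1) = 0 by omega, show 2*l-2*l = 0 by omega, f1, f3, pow_succ,
    Nat.factorial_zero]
  push_cast
  field_simp

lemma cc_rec (l i : ℕ) (h : i < l) :
    cc (l+1) (i+1) = cc l (i+1) + ((4*l-2*i+1 : ℕ) : ℝ) * cc l i := by
  obtain ⟨k, rfl⟩ : ∃ k, l = (i+1) + k := ⟨l - (i+1), by omega⟩
  unfold cc
  rw [show 2*((i+1)+k+1)-2*(i+1) = 2*k+2 by omega,
    show 2*((i+1)+k)-2*(i+1) = 2*k by omega,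
    show 2*((i+1)+k)-2*i = 2*k+2 by omega,
    show 4*((i+1)+k)-2*i+1 = 2*i+4*k+5 by omega,
    show 2*((i+1)+k+1) = 2*i+2*k+4 by omega,
    show 2*((i+1)+k) = 2*i+2*k+2 by omega]
  have f1 : ((2*i+2*k+4).factorial : ℝ)
      = (2*(i:ℝ)+2*k+4) * ((2*(i:ℝ)+2*k+3) * (2*i+2*k+2).factorial) := by
    rw [show 2*i+2*k+4 = (2*i+2*k+3)+1 by omega, Nat.factorial_succ,
      show 2*i+2*k+3 = (2*i+2*k+2)+1 by omega, Nat.factorial_succ]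
    push_cast; ring
  have f2 : ((2*k+2).factorial : ℝ) = (2*(k:ℝ)+2) * ((2*(k:ℝ)+1) * (2*k).factorial) := by
    rw [show 2*k+2 = (2*k+1)+1 by omega, Nat.factorial_succ, Nat.factorial_succ]
    push_cast; ring
  have f3 : ((i+1).factorial : ℝ) = ((i:ℝ)+1) * i.factorial := by
    rw [Nat.factorial_succ]; push_cast; ring
  rw [f1, f2, f3, pow_succ]
  push_cast
  field_simp
  ring

lemma TT_split (l n j : ℕ) (hj : j ≤ l+1) :
    TT (l+1) n j = AA l n j + (if j = 0 then 0 else BB l n (j-1)) := by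
  match j with
  | 0 =>
    rw [if_pos rfl, add_zero]
    simp only [TT, AA]
    have h3 : ((l+1-0 ≤ n ∧ 0 ≤ l) ↔ (l+1-(0:ℕ) ≤ n)) := by omega
    rw [if_congr h3 rfl rfl, cc_zero, cc_zero]
  | (i+1) =>
    rw [if_neg (Nat.succ_ne_zero i), Nat.add_sub_cancel]
    by_cases hi : i = l
    · subst hi
      simp only [TT, AA, BB]
      rw [if_neg (show ¬(i+1-(i+1) ≤ n ∧ i+1 ≤ i) by omega),
        if_pos (show (i+1)-(i+1) ≤ n by omega), if_pos (show i - i ≤ n by omega),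
        show (i+1)-(i+1) = 0 by omega, show i - i = 0 by omega]
      simp only [Nat.sub_zero]
      rw [show 4*i-2*i+1 = 2*i+1 by omega, cc_top]
      ring
    · have hil : i < l := by omega
      simp only [TT, AA, BB]
      rw [show l+1-(i+1) = l-i by omega]
      have h3 : ((l - i ≤ n ∧ i+1 ≤ l) ↔ (l - i ≤ n)) := by
        constructor
        · exact fun h => h.1
        · exact fun h => ⟨h, by omega⟩
      rw [if_congr h3 rfl rfl]
      by_cases hc : l - i ≤ n
      · rw [if_pos hc, if_pos hc, if_pos hc, cc_rec l i hil]
        ring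
      · rw [if_neg hc, if_neg hc, if_neg hc]; ring

lemma AB (l n j : ℕ) (hj : j ≤ l) :
    AA l n j + BB l n j = ((2*n+2*l+1 : ℕ) : ℝ) * TT l n j := by
  simp only [AA, BB, TT]
  by_cases hc : l - j ≤ n
  · rcases Nat.eq_or_lt_of_le hc with hm | hm
    · have hA : ¬ (l+1-j ≤ n ∧ j ≤ l) := by omega
      rw [if_neg hA, if_pos hc, if_pos hc]
      have : (4*l-2*j+1 : ℕ) = (2*n+2*l+1 : ℕ) := by omega
      rw [this, zero_add]
    · have hA : (l+1-j ≤ n ∧ j ≤ l) := ⟨by omega, hj⟩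
      rw [if_pos hA, if_pos hc, if_pos hc]
      obtain ⟨p, hp⟩ : ∃ p, n - (l-j) = p + 1 := ⟨n - (l-j) - 1, by omega⟩
      have hp2 : n - (l+1-j) = p := by omega
      obtain ⟨r, hr⟩ : ∃ r, 4*l-2*j+1 = r := ⟨_, rfl⟩
      have hrr : 2*(p+1) + r = 2*n+2*l+1 := by omega
      rw [hp, hp2, hr, ← hrr, Nat.factorial_succ]
      push_cast
      field_simp
      ring
  · have hA : ¬ (l+1-j ≤ n ∧ j ≤ l) := by omega
    rw [if_neg hA, if_neg hc, if_neg hc]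
    ring

lemma step (l n : ℕ) :
    ∑ j ∈ Finset.range (l+2), TT (l+1) n j
      = ∑ j ∈ Finset.range (l+1), ((2*n+2*l+1 : ℕ) : ℝ) * TT l n j := by
  have h1 : ∑ j ∈ Finset.range (l+2), TT (l+1) n j
      = ∑ j ∈ Finset.range (l+2), (AA l n j + (if j = 0 then 0 else BB l n (j-1))) :=
    Finset.sum_congr rfl fun j hj => TT_split l n j (by
      have := Finset.mem_range.mp hj; omega)
  rw [h1, Finset.sum_add_distrib]
  have h2 : ∑ j ∈ Finset.range (l+2), AA l n j = ∑ j ∈ Finset.range (l+1), AA l n j := by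
    rw [Finset.sum_range_succ]
    have : AA l n (l+1) = 0 := by
      simp only [AA]
      rw [if_neg (by omega)]
    rw [this, add_zero]
  have h3 : ∑ j ∈ Finset.range (l+2), (if j = 0 then (0:ℝ) else BB l n (j-1))
      = ∑ j ∈ Finset.range (l+1), BB l n j := by
    rw [Finset.sum_range_succ' (fun j => if j = 0 then (0:ℝ) else BB l n (j-1)) (l+1)]
    simp
  rw [h2, h3, ← Finset.sum_add_distrib]
  exact Finset.sum_congr rfl fun j hj => AB l n j (by
    have := Finset.mem_range.mp hj; omega)

lemma key (l : ℕ) (n : ℕ) :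
    ((2*n+2*l-1)‼ : ℝ) / ((2*n-1)‼ : ℝ) / ((n.factorial : ℝ) * 2^n)
      = ∑ j ∈ Finset.range (l+1), TT l n j := by
  induction l with
  | zero =>
    have hd : ((2*n-1)‼ : ℝ) ≠ 0 :=
      Nat.cast_ne_zero.mpr (Nat.doubleFactorial_pos _).ne'
    have hR : ∑ j ∈ Finset.range 1, TT 0 n j = 1 / ((n.factorial:ℝ) * 2^n) := by
      rw [Finset.sum_range_one]
      simp only [TT]
      rw [if_pos (by omega : (0:ℕ) - 0 ≤ n), cc_zero]
      simp
    rw [hR, show 2*n+2*0-1 = 2*n-1 by omega, div_self hd]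
  | succ l ih =>
    have hd : ((2*n+2*(l+1)-1)‼ : ℝ) = ((2*n+2*l+1 : ℕ) : ℝ) * ((2*n+2*l-1)‼ : ℝ) := by
      rw [show 2*n+2*(l+1)-1 = (2*(n+l))+1 by omega, Nat.doubleFactorial_add_one,
        show 2*(n+l)-1 = 2*n+2*l-1 by omega]
      push_cast
      ring
    rw [hd]
    have : ((2*n+2*l+1 : ℕ) : ℝ) * ((2*n+2*l-1)‼ : ℝ) / ((2*n-1)‼ : ℝ)
        / ((n.factorial : ℝ) * 2^n)
        = ((2*n+2*l+1 : ℕ) : ℝ)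
          * (((2*n+2*l-1)‼ : ℝ) / ((2*n-1)‼ : ℝ) / ((n.factorial : ℝ) * 2^n)) := by
      ring
    rw [this, ih, Finset.mul_sum, ← step l n]

/-- For every `l : ℕ`,
`∑_{j≥0} (x^j/(j! 2^j)) · ((2j+2l-1)‼/(2j-1)‼)
  = (∑_{j=0}^{l} (2l)!/((2l-2j)! j! 2^j) x^{l-j}) · e^{x/2}`. -/
theorem doubleFactorial_ratio_series (l : ℕ) (x : ℝ) :
    ∑' j : ℕ, x ^ j / ((j.factorial : ℝ) * 2 ^ j) *
        ((Nat.doubleFactorial (2 * j + 2 * l - 1) : ℝ) /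
          (Nat.doubleFactorial (2 * j - 1) : ℝ))
      = (∑ j ∈ Finset.range (l + 1),
          ((2 * l).factorial : ℝ) /
            (((2 * l - 2 * j).factorial : ℝ) * (j.factorial : ℝ) * 2 ^ j) *
            x ^ (l - j)) * Real.exp (x / 2) := by
  have hsx : Summable (fun m : ℕ => x^m / ((m.factorial : ℝ) * 2^m)) := by
    have : (fun m : ℕ => x^m / ((m.factorial : ℝ) * 2^m))
        = fun m : ℕ => (x/2)^m / m.factorial := by
      funext m; rw [div_pow]; ring
    rw [this]
    exact Real.summable_pow_div_factorial (x/2)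
  have hexp : Real.exp (x/2) = ∑' m : ℕ, x^m / ((m.factorial : ℝ) * 2^m) := by
    rw [Real.exp_eq_exp_ℝ, NormedSpace.exp_eq_tsum_div]
    exact tsum_congr fun m => by rw [div_pow]; ring
  set f : ℕ → ℕ → ℝ := fun j n =>
    if l - j ≤ n then cc l j * x ^ n / (((n-(l-j)).factorial : ℝ) * 2^(n-(l-j))) else 0
    with hf
  have hginj : ∀ k : ℕ, Function.Injective (fun m : ℕ => m + k) := fun k a b h => by
    simpa using h
  have hsupp : ∀ j : ℕ, ∀ m : ℕ, m ∉ Set.range (fun i : ℕ => i + (l - j)) → f j m = 0 := by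
    intro j m hm
    have hnot : ¬ (l - j ≤ m) := by
      intro h
      exact hm ⟨m - (l-j), by show m - (l-j) + (l-j) = m; omega⟩
    simp only [hf]
    rw [if_neg hnot]
  have hcomp : ∀ j : ℕ, (fun m => f j (m + (l - j)))
      = fun m : ℕ => cc l j * x^(l-j) * (x^m / ((m.factorial : ℝ) * 2^m)) := by
    intro j
    funext m
    simp only [hf]
    rw [if_pos (by omega : l - j ≤ m + (l-j)), show m + (l-j) - (l-j) = m by omega, pow_add]
    ring
  have hsummable : ∀ j : ℕ, Summable (f j) := by
    intro j
    rw [← Function.Injective.summable_iff (hginj (l-j)) (hsupp j)]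
    have : (f j ∘ fun m : ℕ => m + (l-j)) = fun m => f j (m + (l-j)) := rfl
    rw [this, hcomp j]
    exact (hsx.mul_left _)
  have hterm : ∀ j : ℕ,
      ((2 * l).factorial : ℝ) /
          (((2 * l - 2 * j).factorial : ℝ) * (j.factorial : ℝ) * 2 ^ j) * x ^ (l - j)
        * Real.exp (x/2) = ∑' n, f j n := by
    intro j
    rw [hexp, ← tsum_mul_left]
    rw [← Function.Injective.tsum_eq (hginj (l-j)) (f := f j)
      (fun m hm => by
        by_contra hnot
        exact hm (hsupp j m hnot))]
    refine tsum_congr fun m => ?_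
    have hb : f j ((fun i : ℕ => i + (l - j)) m) = f j (m + (l - j)) := rfl
    rw [hb, congrFun (hcomp j) m]
    simp only [cc]
  rw [Finset.sum_mul]
  have hR : ∑ j ∈ Finset.range (l+1),
      ((2 * l).factorial : ℝ) /
          (((2 * l - 2 * j).factorial : ℝ) * (j.factorial : ℝ) * 2 ^ j) * x ^ (l - j)
        * Real.exp (x/2) = ∑ j ∈ Finset.range (l+1), ∑' n, f j n :=
    Finset.sum_congr rfl fun j _ => hterm j
  rw [hR, ← Summable.tsum_finsetSum (fun j _ => hsummable j)]
  refine tsum_congr fun n => ?_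
  have hkey := key l n
  have hsum : ∑ j ∈ Finset.range (l+1), f j n
      = x^n * ∑ j ∈ Finset.range (l+1), TT l n j := by
    rw [Finset.mul_sum]
    refine Finset.sum_congr rfl fun j _ => ?_
    simp only [hf, TT]
    by_cases hc : l - j ≤ n
    · rw [if_pos hc, if_pos hc]; ring
    · rw [if_neg hc, if_neg hc]; ring
  rw [hsum, ← hkey]
  ring
end

section
/- Let t_0, t_1, t_2, … be formal variables and let I_0 be the formal power series I_0 = ∑_{k≥1} (1/k) ∑_{p_1+⋯+p_k = k-1} (t_{p_1}/p_1!) ⋯ (t_{p_k}/p_k!). Then I_0 satisfies the fixed-point equation I_0 = ∑_{n≥0} t_n I_0^n / n!. -/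
open MvPowerSeries

noncomputable instance : TopologicalSpace (MvPowerSeries ℕ ℝ) :=
  Pi.topologicalSpace

/-- The formal power series
`I₀ = ∑_{k≥1} (1/k) ∑_{p₁+⋯+p_k = k-1} (t_{p₁}/p₁!) ⋯ (t_{p_k}/p_k!)`
in the variables `t₀, t₁, …` (here `t_n` is `MvPowerSeries.X n`). -/
noncomputable def I0series : MvPowerSeries ℕ ℝ :=
  ∑' k : ℕ, ((k : ℝ) + 1)⁻¹ •
    ∑ p ∈ Finset.Nat.antidiagonalTuple (k + 1) k,
      (∏ i, ((p i).factorial : ℝ)⁻¹) • ∏ i, MvPowerSeries.X (p i)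

section AuxiliaryLemmas

open Finset

noncomputable section
namespace I0aux

abbrev Rr : Type := MvPowerSeries ℕ ℝ
abbrev Kk : Type := FractionRing Rr
instance : IsDomain Rr := NoZeroDivisors.to_isDomain _
def phi : Rr →+* Kk := algebraMap Rr Kk
lemma phi_inj : Function.Injective phi := IsFractionRing.injective Rr Kk

local notation "deg" => Finsupp.degree

lemma deg_add (a b : ℕ →₀ ℕ) : deg (a+b) = deg a + deg b := by
  simp [Finsupp.degree_eq_weight_one, map_add]

def Wser (k : ℕ) : Rr :=
  ∑ p ∈ Finset.Nat.antidiagonalTuple (k + 1) k,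
      (∏ i, ((p i).factorial : ℝ)⁻¹) • ∏ i, MvPowerSeries.X (p i)

def Jp (j : ℕ) : Rr := if j = 0 then 0 else ((j : ℝ))⁻¹ • Wser (j - 1)

lemma I0_eq : I0series = ∑' k : ℕ, ((k : ℝ) + 1)⁻¹ • Wser k := rfl

lemma prod_X_eq_monomial {k : ℕ} (p : Fin k → ℕ) :
    (∏ i, (MvPowerSeries.X (p i) : Rr)) =
      MvPowerSeries.monomial (∑ i, Finsupp.single (p i) 1) 1 := by
  induction k with
  | zero => simp [monomial_zero_eq_C]
  | succ n ih =>
      rw [Fin.prod_univ_succ, Fin.sum_univ_succ, ih, X_def, monomial_mul_monomial, one_mul]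

lemma deg_sum_single {k : ℕ} (p : Fin k → ℕ) :
    deg (∑ i, Finsupp.single (p i) 1) = k := by
  induction k with
  | zero => simp
  | succ n ih =>
      rw [Fin.sum_univ_succ, deg_add, ih]
      have : deg (Finsupp.single (p 0) 1) = 1 := by
        exact Finsupp.degree_single _ _
      omega

lemma coeff_W_eq_zero {k : ℕ} {μ : ℕ →₀ ℕ} (h : deg μ ≠ k + 1) :
    coeff μ (Wser k) = 0 := by
  rw [Wser, map_sum]
  refine Finset.sum_eq_zero fun p _ => ?_
  rw [LinearMap.map_smul, prod_X_eq_monomial, coeff_monomial, if_neg, smul_zero]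
  rintro rfl
  exact h (deg_sum_single p)

lemma coeff_Jp_eq_zero {j : ℕ} {μ : ℕ →₀ ℕ} (h : deg μ ≠ j) :
    coeff μ (Jp j) = 0 := by
  rcases Nat.eq_zero_or_pos j with rfl | hj
  · simp [Jp]
  · rw [Jp, if_neg hj.ne', LinearMap.map_smul, coeff_W_eq_zero, smul_zero]
    omega

lemma coeff_term_eq_zero {k : ℕ} {μ : ℕ →₀ ℕ} (h : deg μ ≠ k + 1) :
    (((k : ℝ) + 1)⁻¹ • Wser k) μ = 0 := by
  have : (((k : ℝ) + 1)⁻¹ • Wser k) μ = ((k : ℝ) + 1)⁻¹ * coeff μ (Wser k) := rfl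
  rw [this, coeff_W_eq_zero h, mul_zero]

lemma summable_I0 : Summable (fun k : ℕ => ((k : ℝ) + 1)⁻¹ • Wser k) := by
  refine Pi.summable.mpr ?_
  intro μ
  apply summable_of_ne_finset_zero (s := {deg μ - 1})
  intro k hk
  simp only [Finset.mem_singleton] at hk
  apply coeff_term_eq_zero
  omega

lemma coeff_I0 (μ : ℕ →₀ ℕ) : coeff μ I0series = coeff μ (Jp (deg μ)) := by
  have h1 : coeff μ I0series = ∑' k : ℕ, (((k : ℝ) + 1)⁻¹ • Wser k) μ := by
    rw [I0_eq, coeff_apply]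
    exact tsum_apply summable_I0
  rcases Nat.eq_zero_or_pos (deg μ) with h0 | hpos
  · have hJ : coeff μ (Jp (deg μ)) = 0 := by rw [h0]; simp [Jp]
    rw [h1, hJ]
    convert tsum_zero with k
    exact coeff_term_eq_zero (by omega)
  · rw [h1, tsum_eq_single (deg μ - 1) (fun k hk => coeff_term_eq_zero (by omega))]
    rw [Jp, if_neg hpos.ne', LinearMap.map_smul]
    have : (((deg μ - 1 : ℕ) : ℝ) + 1) = ((deg μ : ℕ) : ℝ) := by
      push_cast [Nat.cast_sub hpos]
      ring
    rw [coeff_apply]  -- LHS is application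
    show (((deg μ - 1 : ℕ) : ℝ) + 1)⁻¹ * coeff μ (Wser (deg μ - 1)) = _
    rw [this]
    rfl


def Gser (n i : ℕ) : Rr := ∑ d ∈ Finset.Nat.antidiagonalTuple n i, ∏ t, Jp (d t)

lemma coeff_prod_Jp_eq_zero : ∀ {n : ℕ} (d : Fin n → ℕ) {μ : ℕ →₀ ℕ},
    deg μ ≠ ∑ t, d t → coeff μ (∏ t, Jp (d t)) = 0 := by
  intro n
  induction n with
  | zero =>
      intro d μ h
      simp only [Finset.univ_eq_empty, Finset.prod_empty, Finset.sum_empty] at h ⊢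
      rw [coeff_one, if_neg]
      intro h0
      exact h (by rw [h0]; simp)
  | succ n ih =>
      intro d μ h
      rw [Fin.sum_univ_succ] at h
      rw [Fin.prod_univ_succ, coeff_mul]
      refine Finset.sum_eq_zero fun ab hab => ?_
      rw [Finset.HasAntidiagonal.mem_antidiagonal] at hab
      by_cases h1 : deg ab.1 = d 0
      · have h2 : deg ab.2 ≠ ∑ t : Fin n, d t.succ := by
          have := deg_add ab.1 ab.2
          rw [hab] at this
          omega
        rw [ih (fun t => d t.succ) h2, mul_zero]
      · rw [coeff_Jp_eq_zero h1, zero_mul]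

lemma coeff_I0_pow : ∀ (n : ℕ) (μ : ℕ →₀ ℕ),
    coeff μ (I0series ^ n) = coeff μ (Gser n (deg μ)) := by
  intro n
  induction n with
  | zero =>
      intro μ
      rcases Nat.eq_zero_or_pos (deg μ) with h0 | hpos
      · have : μ = 0 := (Finsupp.degree_eq_zero_iff μ).mp h0
        subst this
        simp [Gser, Finset.Nat.antidiagonalTuple_zero_right, h0]
      · rw [pow_zero, coeff_one, if_neg, Gser]
        · have : deg μ = (deg μ - 1) + 1 := by omega
          rw [this, Finset.Nat.antidiagonalTuple_zero_succ]
          simp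
        · rintro rfl; simp at hpos
  | succ n ih =>
      intro μ
      have hpow : I0series ^ (n + 1) = I0series * I0series ^ n := by ring
      rw [hpow, coeff_mul, Gser, map_sum]
      have hswap : ∀ d ∈ Finset.Nat.antidiagonalTuple (n+1) (deg μ),
          coeff μ (∏ t, Jp (d t)) =
          ∑ ab ∈ Finset.HasAntidiagonal.antidiagonal μ,
            coeff ab.1 (Jp (d 0)) * coeff ab.2 (∏ t : Fin n, Jp (d t.succ)) := by
        intro d _
        rw [Fin.prod_univ_succ, coeff_mul]
      rw [Finset.sum_congr rfl hswap, Finset.sum_comm]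
      refine Finset.sum_congr rfl fun ab hab => ?_
      rw [Finset.HasAntidiagonal.mem_antidiagonal] at hab
      have hdeg : deg ab.1 + deg ab.2 = deg μ := by rw [← deg_add, hab]
      rw [coeff_I0 ab.1, ih ab.2, Gser, map_sum, Finset.mul_sum]
      have himage : (Finset.Nat.antidiagonalTuple n (deg ab.2)).image (Fin.cons (deg ab.1)) ⊆
          Finset.Nat.antidiagonalTuple (n+1) (deg μ) := by
        intro d hd
        rw [Finset.mem_image] at hd
        obtain ⟨e, he, rfl⟩ := hd
        rw [Finset.Nat.mem_antidiagonalTuple] at he ⊢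
        rw [Fin.sum_univ_succ, Fin.cons_zero]
        simp only [Fin.cons_succ]
        omega
      have hvan : ∀ d ∈ Finset.Nat.antidiagonalTuple (n+1) (deg μ),
          d ∉ (Finset.Nat.antidiagonalTuple n (deg ab.2)).image (Fin.cons (deg ab.1)) →
          coeff ab.1 (Jp (d 0)) * coeff ab.2 (∏ t : Fin n, Jp (d t.succ)) = 0 := by
        intro d hd hnot
        rw [Finset.Nat.mem_antidiagonalTuple] at hd
        by_cases h1 : deg ab.1 = d 0
        · by_cases h2 : deg ab.2 = ∑ t : Fin n, d t.succ
          · exfalso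
            apply hnot
            rw [Finset.mem_image]
            refine ⟨Fin.tail d, ?_, ?_⟩
            · rw [Finset.Nat.mem_antidiagonalTuple]
              exact h2.symm
            · rw [h1, Fin.cons_self_tail]
          · rw [coeff_prod_Jp_eq_zero _ h2, mul_zero]
        · rw [coeff_Jp_eq_zero h1, zero_mul]
      rw [← Finset.sum_subset himage hvan,
        Finset.sum_image (fun e _ e' _ hee => Fin.cons_right_injective _ hee)]
      refine Finset.sum_congr rfl fun e he => ?_
      simp only [Fin.cons_zero, Fin.cons_succ]

lemma coeff_I0_pow_eq_zero {n : ℕ} {μ : ℕ →₀ ℕ} (h : deg μ < n) :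
    coeff μ (I0series ^ n) = 0 := by
  rw [coeff_I0_pow, Gser, map_sum]
  refine Finset.sum_eq_zero fun d hd => ?_
  rw [Finset.Nat.mem_antidiagonalTuple] at hd
  have : ∃ t, d t = 0 := by
    by_contra hno
    push_neg at hno
    have : ∀ t ∈ Finset.univ (α := Fin n), 1 ≤ d t := fun t _ => Nat.one_le_iff_ne_zero.mpr (hno t)
    have hle := Finset.sum_le_sum this
    simp only [Finset.sum_const, Finset.card_univ, Fintype.card_fin, smul_eq_mul, mul_one] at hle
    omega
  obtain ⟨t, ht⟩ := this
  rw [Finset.prod_eq_zero (Finset.mem_univ t) (by rw [ht]; simp [Jp]), map_zero]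

-- ### Section C : the one-variable engine over Kk

def Phi : PowerSeries Kk :=
  PowerSeries.mk fun n => phi (MvPowerSeries.C ((n.factorial : ℝ))⁻¹ * MvPowerSeries.X n)

def tc (j : ℕ) : Kk :=
  if j = 0 then 0 else
    ∑ n ∈ Finset.range j, PowerSeries.coeff n Phi *
      PowerSeries.coeff (j-1)
        ((PowerSeries.mk (fun i => if h' : i < j then tc i else 0)) ^ n)
termination_by j
decreasing_by exact h'

def Th : PowerSeries Kk := PowerSeries.mk tc

lemma tc_zero : tc 0 = 0 := by rw [tc]; simp

lemma constantCoeff_Th : PowerSeries.constantCoeff Th = 0 := by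
  rw [Th, ← PowerSeries.coeff_zero_eq_constantCoeff, PowerSeries.coeff_mk, tc_zero]

lemma coeff_Th_pow_zero : ∀ (n : ℕ) {m : ℕ}, m < n → PowerSeries.coeff m (Th ^ n) = 0 := by
  intro n
  induction n with
  | zero => intro m hm; omega
  | succ n ih =>
      intro m hm
      rw [pow_succ, PowerSeries.coeff_mul]
      refine Finset.sum_eq_zero fun p hp => ?_
      rw [Finset.HasAntidiagonal.mem_antidiagonal] at hp
      by_cases h1 : p.1 < n
      · rw [ih h1, zero_mul]
      · have : p.2 = 0 := by omega
        rw [this, PowerSeries.coeff_zero_eq_constantCoeff, constantCoeff_Th, mul_zero]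

lemma coeff_pow_congr {f g : PowerSeries Kk} {m : ℕ}
    (h : ∀ i ≤ m, PowerSeries.coeff i f = PowerSeries.coeff i g) (n : ℕ) :
    PowerSeries.coeff m (f ^ n) = PowerSeries.coeff m (g ^ n) := by
  rw [PowerSeries.coeff_pow, PowerSeries.coeff_pow]
  refine Finset.sum_congr rfl fun l hl => Finset.prod_congr rfl fun i hi => ?_
  rw [Finset.mem_finsuppAntidiag] at hl
  apply h
  calc l i ≤ ∑ a ∈ Finset.range n, l a := Finset.single_le_sum (fun a _ => Nat.zero_le _) hi
  _ = m := hl.1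

lemma tc_eq {j : ℕ} (hj : j ≠ 0) :
    tc j = ∑ n ∈ Finset.range j, PowerSeries.coeff n Phi *
      PowerSeries.coeff (j-1) (Th ^ n) := by
  rw [tc, if_neg hj]
  refine Finset.sum_congr rfl fun n _ => ?_
  congr 1
  apply coeff_pow_congr (fun i hi => ?_)
  rw [PowerSeries.coeff_mk, Th, PowerSeries.coeff_mk, dif_pos (by omega)]

def compT (G : PowerSeries Kk) : PowerSeries Kk :=
  PowerSeries.mk fun m =>
    PowerSeries.coeff m (Polynomial.aeval Th (PowerSeries.trunc (m+1) G))

lemma coeff_aeval_congr {P Q : Polynomial Kk} {m : ℕ} (h : ∀ i ≤ m, P.coeff i = Q.coeff i) :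
    PowerSeries.coeff m (Polynomial.aeval Th P) =
      PowerSeries.coeff m (Polynomial.aeval Th Q) := by
  set M := max P.natDegree Q.natDegree + 1 with hM
  rw [Polynomial.aeval_eq_sum_range' (n := M) (by omega) Th,
      Polynomial.aeval_eq_sum_range' (n := M) (by omega) Th]
  rw [map_sum, map_sum]
  refine Finset.sum_congr rfl fun i _ => ?_
  by_cases him : i ≤ m
  · rw [h i him]
  · rw [LinearMap.map_smul, LinearMap.map_smul, coeff_Th_pow_zero i (by omega), smul_zero,
      smul_zero]

lemma coeff_compT (G : PowerSeries Kk) (m : ℕ) :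
    PowerSeries.coeff m (compT G) =
      ∑ n ∈ Finset.range (m+1), PowerSeries.coeff n G *
        PowerSeries.coeff m (Th ^ n) := by
  rw [compT, PowerSeries.coeff_mk,
    Polynomial.aeval_eq_sum_range' (PowerSeries.natDegree_trunc_lt G m) Th, map_sum]
  refine Finset.sum_congr rfl fun n hn => ?_
  rw [Finset.mem_range] at hn
  rw [LinearMap.map_smul, PowerSeries.coeff_trunc, if_pos hn, smul_eq_mul]

lemma compT_one : compT 1 = 1 := by
  ext m
  rw [coeff_compT]
  rw [Finset.sum_eq_single 0]
  · simp
  · intro n _ hn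
    rw [PowerSeries.coeff_one, if_neg hn, zero_mul]
  · simp

lemma compT_mul (G H : PowerSeries Kk) : compT (G * H) = compT G * compT H := by
  ext m
  rw [PowerSeries.coeff_mul]
  have key : PowerSeries.coeff m (compT (G*H)) =
      PowerSeries.coeff m (Polynomial.aeval Th
        (PowerSeries.trunc (m+1) G * PowerSeries.trunc (m+1) H)) := by
    rw [compT, PowerSeries.coeff_mk]
    apply coeff_aeval_congr
    intro i hi
    rw [PowerSeries.coeff_trunc, if_pos (by omega), Polynomial.coeff_mul,
      PowerSeries.coeff_mul]
    refine Finset.sum_congr rfl fun p hp => ?_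
    rw [Finset.HasAntidiagonal.mem_antidiagonal] at hp
    rw [PowerSeries.coeff_trunc, if_pos (by omega), PowerSeries.coeff_trunc,
      if_pos (by omega)]
  rw [key, map_mul, PowerSeries.coeff_mul]
  refine Finset.sum_congr rfl fun p hp => ?_
  rw [Finset.HasAntidiagonal.mem_antidiagonal] at hp
  congr 1
  · rw [compT, PowerSeries.coeff_mk]
    apply coeff_aeval_congr
    intro i hi
    rw [PowerSeries.coeff_trunc, PowerSeries.coeff_trunc, if_pos (by omega), if_pos (by omega)]
  · rw [compT, PowerSeries.coeff_mk]
    apply coeff_aeval_congr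
    intro i hi
    rw [PowerSeries.coeff_trunc, PowerSeries.coeff_trunc, if_pos (by omega), if_pos (by omega)]

lemma compT_pow (G : PowerSeries Kk) (n : ℕ) : compT (G ^ n) = (compT G) ^ n := by
  induction n with
  | zero => rw [pow_zero, pow_zero, compT_one]
  | succ n ih => rw [pow_succ, pow_succ, compT_mul, ih]

def Vs : PowerSeries Kk := compT Phi

lemma Th_eq : Th = PowerSeries.X * Vs := by
  ext j
  cases j with
  | zero =>
      rw [Th, PowerSeries.coeff_mk, tc_zero, PowerSeries.coeff_zero_eq_constantCoeff, map_mul]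
      simp
  | succ j =>
      rw [Th, PowerSeries.coeff_mk, PowerSeries.coeff_succ_X_mul, tc_eq (Nat.succ_ne_zero j),
        Vs, coeff_compT]
      simp

lemma constantCoeff_Vs : PowerSeries.constantCoeff Vs = phi (MvPowerSeries.X 0) := by
  rw [← PowerSeries.coeff_zero_eq_constantCoeff, Vs, coeff_compT]
  simp [Phi]

lemma X0_ne_zero : (MvPowerSeries.X 0 : Rr) ≠ 0 := by
  intro h
  have := congrArg (coeff (Finsupp.single 0 1)) h
  rw [coeff_X, if_pos rfl, map_zero] at this
  exact one_ne_zero this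

lemma hVs : PowerSeries.constantCoeff Vs ≠ 0 := by
  rw [constantCoeff_Vs]
  intro h
  exact X0_ne_zero (phi_inj (by rwa [map_zero]))

def Us : PowerSeries Kk := Vs⁻¹

lemma hUV : Us * Vs = 1 := by
  rw [mul_comm, Us, PowerSeries.mul_inv_cancel Vs hVs]

lemma natCast_ne_zero {n : ℕ} (hn : n ≠ 0) : (n : Kk) ≠ 0 := by
  intro h
  rw [← map_natCast phi n] at h
  have h3 : ((n : ℕ) : Rr) = 0 := phi_inj (by rwa [map_zero])
  have := congrArg (MvPowerSeries.constantCoeff) h3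
  rw [map_natCast, map_zero] at this
  exact (Nat.cast_ne_zero.mpr hn) this

lemma vanish {m : ℕ} (hm : 2 ≤ m) :
    PowerSeries.coeff (m-1) (Us^m * PowerSeries.derivative (R := Kk) Th) = 0 := by
  set DD := PowerSeries.derivative (R := Kk) with hDD
  set V' := DD Vs with hV'
  have hDT : DD Th = Vs + PowerSeries.X * V' := by
    rw [Th_eq, Derivation.leibniz, PowerSeries.derivative_X, smul_eq_mul, smul_eq_mul,
      mul_one, add_comm]
  have hsplit : Us^m = Us^(m-1) * Us := by
    rw [← pow_succ]
    congr 1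
    omega
  have hUm : Us^m * Vs = Us^(m-1) := by
    rw [hsplit, mul_assoc, hUV, mul_one]
  have hA : Us^m * DD Th = Us^(m-1) + PowerSeries.X * (Us^m * V') := by
    rw [hDT, mul_add, hUm]
    ring
  have hpows : Us ^ (m-1-1) * (Us^2 * V') = Us^m * V' := by
    rw [← mul_assoc, ← pow_add]
    congr 2
    omega
  have hDU : DD (Us^(m-1)) = -((m-1 : ℕ) • (Us^m * V')) := by
    rw [Derivation.leibniz_pow]
    have hinv : DD Us = -(Us^2 * V') := by
      rw [Us, PowerSeries.derivative_inv']
      ring_nf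
      rfl
    rw [hinv, smul_neg, smul_neg, smul_eq_mul, hpows]
  -- coefficient extraction
  set c := PowerSeries.coeff (m-1) (Us^(m-1)) with hc
  set x := PowerSeries.coeff (m-2) (Us^m * V') with hx
  have hm1 : m - 2 + 1 = m - 1 := by omega
  have hcast : ((m-1 : ℕ) : Kk) = ((m-2 : ℕ) : Kk) + 1 := by
    rw [← hm1]
    push_cast
    ring
  have e1 : PowerSeries.coeff (m-2) (DD (Us^(m-1))) = c * (((m-2:ℕ) : Kk) + 1) := by
    rw [hDD, PowerSeries.coeff_derivative, hm1, hc]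
  have e2 : PowerSeries.coeff (m-2) (DD (Us^(m-1)))
      = -(((m-1 : ℕ) : Kk) * x) := by
    rw [hDU, map_neg, ← nsmul_eq_mul]
    congr 1
  rw [hcast] at e2
  have e12 := e1.symm.trans e2
  have h5 : ((m-1:ℕ) : Kk) * (x + c) = 0 := by
    rw [hcast]
    linear_combination e12
  have e3 : x = -c := by
    rcases mul_eq_zero.mp h5 with h | h
    · exact absurd h (natCast_ne_zero (by omega))
    · exact eq_neg_of_add_eq_zero_left h
  rw [hA, map_add]
  have e4 : PowerSeries.coeff (m-1) (PowerSeries.X * (Us^m * V')) = x := by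
    have h6 : m - 1 = (m-2) + 1 := by omega
    rw [hx, h6, PowerSeries.coeff_succ_X_mul]
  rw [e4, e3, hc]
  ring

lemma coeff_zero_U_DTh :
    PowerSeries.coeff 0 (Us * PowerSeries.derivative (R := Kk) Th) = 1 := by
  rw [PowerSeries.coeff_zero_eq_constantCoeff, map_mul]
  have h1 : PowerSeries.constantCoeff (PowerSeries.derivative (R := Kk) Th)
      = PowerSeries.constantCoeff Vs := by
    rw [← PowerSeries.coeff_zero_eq_constantCoeff, PowerSeries.coeff_derivative]
    norm_num
    rw [Th_eq]
    simpa using PowerSeries.coeff_succ_X_mul 0 Vs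
  have h2 : PowerSeries.constantCoeff Us = (PowerSeries.constantCoeff Vs)⁻¹ := by
    rw [Us, PowerSeries.constantCoeff_inv]
  rw [h1, h2, inv_mul_cancel₀ hVs]

lemma key_lagrange {j : ℕ} (hj : 1 ≤ j) :
    (j : Kk) * tc j = PowerSeries.coeff (j-1) (Phi ^ j) := by
  set DD := PowerSeries.derivative (R := Kk) with hDD
  -- step 1 : j * tc j is a coefficient of the derivative
  have step1 : PowerSeries.coeff (j-1) (DD Th) = (j : Kk) * tc j := by
    rw [hDD, PowerSeries.coeff_derivative]
    have : j - 1 + 1 = j := by omega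
    rw [this, Th, PowerSeries.coeff_mk, Nat.cast_sub hj]
    push_cast
    ring
  -- step 2 : theseries Vs^j agrees with a finite sum modulo high order terms
  set S : PowerSeries Kk :=
    ∑ n ∈ Finset.range j, PowerSeries.C (PowerSeries.coeff n (Phi^j)) * Th ^ n with hS
  have hcompT : compT (Phi ^ j) = Vs ^ j := by rw [compT_pow]; rfl
  have hDser : ∀ m' : ℕ, m' < j → PowerSeries.coeff m' (Vs ^ j - S) = 0 := by
    intro m' hm'
    rw [map_sub, ← hcompT, coeff_compT, hS, map_sum, sub_eq_zero]
    rw [Finset.sum_subset (Finset.range_subset_range.mpr (by omega : m' + 1 ≤ j))]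
    · refine Finset.sum_congr rfl fun n _ => ?_
      rw [PowerSeries.coeff_C_mul]
    · intro n hn hnot
      rw [Finset.mem_range] at hn hnot
      rw [coeff_Th_pow_zero n (by omega), mul_zero]
  -- step 3 : expand
  have hfactor : DD Th = Vs ^ j * (Us ^ j * DD Th) := by
    rw [← mul_assoc, ← mul_pow, mul_comm Vs Us, hUV, one_pow, one_mul]
  have expand : PowerSeries.coeff (j-1) (DD Th)
      = PowerSeries.coeff (j-1) (S * (Us ^ j * DD Th))
        + PowerSeries.coeff (j-1) ((Vs ^ j - S) * (Us ^ j * DD Th)) := by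
    rw [← map_add]
    congr 1
    linear_combination hfactor
  have hzero : PowerSeries.coeff (j-1) ((Vs ^ j - S) * (Us ^ j * DD Th)) = 0 := by
    rw [PowerSeries.coeff_mul]
    refine Finset.sum_eq_zero fun p hp => ?_
    rw [Finset.HasAntidiagonal.mem_antidiagonal] at hp
    rw [hDser p.1 (by omega), zero_mul]
  -- step 4 : compute the S part
  have hUV' : Vs * Us = 1 := by rw [mul_comm]; exact hUV
  have hTUs : ∀ n, n < j → Th ^ n * Us ^ j = PowerSeries.X ^ n * Us ^ (j-n) := by
    intro n hn
    have h7 : Us ^ j = Us ^ n * Us ^ (j - n) := by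
      rw [← pow_add]
      congr 1
      omega
    calc Th^n * Us^j = PowerSeries.X^n * ((Vs^n * Us^n) * Us^(j-n)) := by
          rw [Th_eq, mul_pow, h7]; ring
    _ = PowerSeries.X^n * Us^(j-n) := by rw [← mul_pow, hUV', one_pow, one_mul]
  have hterm : ∀ n, n < j →
      PowerSeries.coeff (j-1) (PowerSeries.C (PowerSeries.coeff n (Phi^j)) * Th^n
        * (Us^j * DD Th))
      = PowerSeries.coeff n (Phi^j)
          * PowerSeries.coeff (j-1-n) (Us^(j-n) * DD Th) := by
    intro n hn
    rw [mul_assoc, ← PowerSeries.smul_eq_C_mul, LinearMap.map_smul, smul_eq_mul]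
    congr 1
    rw [← mul_assoc, hTUs n hn, mul_assoc]
    have h12 := PowerSeries.coeff_X_pow_mul (Us^(j-n) * DD Th) n (j-1-n)
    have h13 : j - 1 - n + n = j - 1 := by omega
    rw [h13] at h12
    exact h12
  have hSpart : PowerSeries.coeff (j-1) (S * (Us ^ j * DD Th))
      = PowerSeries.coeff (j-1) (Phi^j) := by
    rw [hS, Finset.sum_mul, map_sum, Finset.sum_eq_single (j-1)]
    · rw [hterm (j-1) (by omega)]
      have h9 : j - 1 - (j-1) = 0 := by omega
      have h10 : j - (j-1) = 1 := by omega
      rw [h9, h10, pow_one, coeff_zero_U_DTh, mul_one]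
    · intro n hn hne
      rw [Finset.mem_range] at hn
      rw [hterm n hn]
      have h11 : j - 1 - n = (j - n) - 1 := by omega
      rw [h11, vanish (by omega), mul_zero]
    · intro h
      exact absurd (Finset.mem_range.mpr (by omega : j - 1 < j)) h
  rw [← step1, expand, hzero, add_zero, hSpart]

lemma sum_finsuppAntidiag_eq {M : Type*} [AddCommMonoid M] (n i : ℕ)
    (F : (Fin n → ℕ) → M) :
    ∑ l ∈ Finset.finsuppAntidiag (Finset.range n) i, F (fun t : Fin n => l t)
      = ∑ d ∈ Finset.Nat.antidiagonalTuple n i, F d := by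
  have hg : ∀ (d : Fin n → ℕ) (s : Fin n),
      (∑ t : Fin n, Finsupp.single (t : ℕ) (d t)) (s : ℕ) = d s := by
    intro d s
    rw [Finset.sum_apply']
    rw [Finset.sum_eq_single s]
    · rw [Finsupp.single_apply, if_pos rfl]
    · intro t _ hts
      rw [Finsupp.single_apply, if_neg]
      simp only [Fin.val_eq_val]
      exact hts
    · intro h
      exact absurd (Finset.mem_univ s) h
  have hg0 : ∀ (d : Fin n → ℕ) (a : ℕ), ¬ a < n →
      (∑ t : Fin n, Finsupp.single (t : ℕ) (d t)) a = 0 := by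
    intro d a ha
    rw [Finset.sum_apply']
    refine Finset.sum_eq_zero fun t _ => ?_
    rw [Finsupp.single_apply, if_neg]
    omega
  refine Finset.sum_nbij' (i := fun l => (fun t : Fin n => l t))
    (j := fun d => ∑ t : Fin n, Finsupp.single (t : ℕ) (d t)) ?_ ?_ ?_ ?_ ?_
  · intro l hl
    rw [Finset.mem_finsuppAntidiag] at hl
    rw [Finset.Nat.mem_antidiagonalTuple]
    rw [← hl.1, Finset.sum_range fun a => l a]
  · intro d hd
    rw [Finset.Nat.mem_antidiagonalTuple] at hd
    rw [Finset.mem_finsuppAntidiag]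
    constructor
    · rw [← hd, Finset.sum_range]
      exact Finset.sum_congr rfl fun t _ => hg d t
    · intro a ha
      rw [Finsupp.mem_support_iff] at ha
      rw [Finset.mem_range]
      by_contra hc
      exact ha (hg0 d a hc)
  · intro l hl
    rw [Finset.mem_finsuppAntidiag] at hl
    ext a
    by_cases ha : a < n
    · exact hg _ ⟨a, ha⟩
    · rw [hg0 _ a ha]
      by_contra hc
      have : a ∈ l.support := Finsupp.mem_support_iff.mpr fun h => hc h.symm
      exact ha (Finset.mem_range.mp (hl.2 this))
  · intro d hd
    funext s
    exact hg d s
  · intro l hl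
    rfl

lemma coeff_pow_mk (f : ℕ → Rr) (n i : ℕ) :
    PowerSeries.coeff i ((PowerSeries.mk fun m => phi (f m)) ^ n)
      = phi (∑ d ∈ Finset.Nat.antidiagonalTuple n i, ∏ t, f (d t)) := by
  rw [PowerSeries.coeff_pow, map_sum]
  rw [← sum_finsuppAntidiag_eq n i (fun d => phi (∏ t, f (d t)))]
  refine Finset.sum_congr rfl fun l _ => ?_
  rw [map_prod]
  rw [← Fin.prod_univ_eq_prod_range (fun a => PowerSeries.coeff (l a)
    (PowerSeries.mk fun m => phi (f m))) n]
  exact Finset.prod_congr rfl fun t _ => by rw [PowerSeries.coeff_mk]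

lemma wser_sum (j : ℕ) (hj : 1 ≤ j) :
    (∑ d ∈ Finset.Nat.antidiagonalTuple j (j-1),
      ∏ t, (MvPowerSeries.C (((d t).factorial : ℝ))⁻¹ * MvPowerSeries.X (d t)))
      = Wser (j-1) := by
  rw [Wser]
  have hidx : j - 1 + 1 = j := by omega
  rw [hidx]
  refine Finset.sum_congr rfl fun d _ => ?_
  rw [Finset.prod_mul_distrib, ← map_prod, ← MvPowerSeries.smul_eq_C_mul]

lemma tc_eq_phi_Jp : ∀ j, tc j = phi (Jp j) := by
  intro j
  rcases Nat.eq_zero_or_pos j with rfl | hj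
  · rw [tc_zero, Jp, if_pos rfl, map_zero]
  have h1 : (j : Kk) * tc j = phi (Wser (j-1)) := by
    rw [key_lagrange hj, Phi, coeff_pow_mk, wser_sum j hj]
  have h2 : (j : Kk) * phi (Jp j) = phi (Wser (j-1)) := by
    rw [← map_natCast phi j, ← map_mul]
    congr 1
    have : ((j : ℕ) : Rr) = MvPowerSeries.C ((j : ℕ) : ℝ) := by
      rw [map_natCast]
    rw [this, Jp, if_neg hj.ne', ← MvPowerSeries.smul_eq_C_mul, smul_smul,
      mul_inv_cancel₀ (by positivity : ((j:ℕ):ℝ) ≠ 0), one_smul]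
  exact mul_left_cancel₀ (natCast_ne_zero hj.ne') (h1.trans h2.symm)

lemma Th_eq_mk : Th = PowerSeries.mk fun m => phi (Jp m) := by
  ext m
  rw [Th, PowerSeries.coeff_mk, PowerSeries.coeff_mk, tc_eq_phi_Jp]

/-- The master identity in `Rr`. -/
lemma master (j : ℕ) (hj : 1 ≤ j) :
    Jp j = ∑ n ∈ Finset.range j,
      MvPowerSeries.C ((n.factorial : ℝ))⁻¹ * MvPowerSeries.X n * Gser n (j-1) := by
  apply phi_inj
  rw [← tc_eq_phi_Jp, tc_eq (by omega), map_sum]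
  refine Finset.sum_congr rfl fun n _ => ?_
  rw [Th_eq_mk, coeff_pow_mk Jp n (j-1), Phi, PowerSeries.coeff_mk, ← map_mul, mul_assoc]
  congr 1
  rw [Gser, mul_assoc]

lemma single_deg1 (n : ℕ) : deg (Finsupp.single n 1) = 1 := by
  exact Finsupp.degree_single _ _

lemma coeff_X_I0_vanish {μ : ℕ →₀ ℕ} {n : ℕ} (h : deg μ ≤ n) :
    coeff μ (MvPowerSeries.X n * I0series ^ n) = 0 := by
  rw [coeff_mul]
  refine Finset.sum_eq_zero fun p hp => ?_
  rw [Finset.HasAntidiagonal.mem_antidiagonal] at hp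
  by_cases h1 : p.1 = Finsupp.single n 1
  · have hdeg : deg p.1 + deg p.2 = deg μ := by rw [← deg_add, hp]
    rw [h1, single_deg1] at hdeg
    rw [coeff_I0_pow_eq_zero (by omega), mul_zero]
  · rw [coeff_X, if_neg h1, zero_mul]

lemma coeff_XG_eq {μ : ℕ →₀ ℕ} (n : ℕ) :
    coeff μ (MvPowerSeries.X n * Gser n (deg μ - 1))
      = coeff μ (MvPowerSeries.X n * I0series ^ n) := by
  rw [coeff_mul, coeff_mul]
  refine Finset.sum_congr rfl fun p hp => ?_
  rw [Finset.HasAntidiagonal.mem_antidiagonal] at hp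
  by_cases h1 : p.1 = Finsupp.single n 1
  · congr 1
    have hdeg : deg p.1 + deg p.2 = deg μ := by rw [← deg_add, hp]
    rw [h1, single_deg1] at hdeg
    have h2 : deg p.2 = deg μ - 1 := by omega
    rw [coeff_I0_pow, h2]
  · rw [coeff_X, if_neg h1, zero_mul, zero_mul]

lemma term_apply (n : ℕ) (μ : ℕ →₀ ℕ) :
    coeff μ (((n.factorial : ℝ))⁻¹ • (MvPowerSeries.X n * I0series ^ n))
      = ((n.factorial : ℝ))⁻¹ * coeff μ (MvPowerSeries.X n * I0series ^ n) := by
  rw [LinearMap.map_smul, smul_eq_mul]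

lemma term_vanish {n : ℕ} {μ : ℕ →₀ ℕ} (h : deg μ ≤ n) :
    coeff μ (((n.factorial : ℝ))⁻¹ • (MvPowerSeries.X n * I0series ^ n)) = 0 := by
  rw [term_apply, coeff_X_I0_vanish h, mul_zero]

lemma summable_rhs :
    Summable (fun n : ℕ => ((n.factorial : ℝ))⁻¹ •
      (MvPowerSeries.X n * I0series ^ n)) := by
  refine Pi.summable.mpr ?_
  intro μ
  apply summable_of_ne_finset_zero (s := Finset.range (deg μ + 1))
  intro n hn
  rw [Finset.mem_range] at hn
  exact term_vanish (by omega)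

theorem main_result :
    I0series = ∑' n : ℕ, ((n.factorial : ℝ))⁻¹ •
      (MvPowerSeries.X n * I0series ^ n) := by
  refine MvPowerSeries.ext fun μ => ?_
  have hrhs : coeff μ (∑' n : ℕ, ((n.factorial : ℝ))⁻¹ •
      (MvPowerSeries.X n * I0series ^ n))
      = ∑ n ∈ Finset.range (deg μ), ((n.factorial : ℝ))⁻¹ *
          coeff μ (MvPowerSeries.X n * I0series ^ n) := by
    have h1 : coeff μ (∑' n : ℕ, ((n.factorial : ℝ))⁻¹ •
        (MvPowerSeries.X n * I0series ^ n))
        = ∑' n : ℕ, coeff μ (((n.factorial : ℝ))⁻¹ •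
            (MvPowerSeries.X n * I0series ^ n)) := tsum_apply summable_rhs
    rw [h1, tsum_eq_sum (s := Finset.range (deg μ))
        (fun n hn => term_vanish (by
          rw [Finset.mem_range] at hn
          omega))]
    exact Finset.sum_congr rfl fun n _ => term_apply n μ
  rw [hrhs, coeff_I0]
  rcases Nat.eq_zero_or_pos (deg μ) with h0 | hpos
  · rw [h0]
    simp [Jp]
  · rw [master (deg μ) hpos, map_sum]
    refine Finset.sum_congr rfl fun n _ => ?_
    rw [mul_assoc, ← MvPowerSeries.smul_eq_C_mul, LinearMap.map_smul, smul_eq_mul,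
      coeff_XG_eq]

end I0aux

end

end AuxiliaryLemmas

/-- `I₀` satisfies the fixed-point equation `I₀ = ∑_{n≥0} t_n I₀^n/n!`. -/
theorem I0series_fixed_point :
    I0series = ∑' n : ℕ, ((n.factorial : ℝ))⁻¹ •
      (MvPowerSeries.X n * I0series ^ n) := by
  exact I0aux.main_result
end

section
/- Let I_0 satisfy I_0 = ∑_{n≥0} t_n I_0^n/n! and define I_k = ∑_{n≥0} t_{n+k} I_0^n/n! for k ≥ 1. Then for every k ≥ 0, t_k = ∑_{n≥0} ((-1)^n I_0^n / n!) I_{n+k}. -/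
open MvPowerSeries

lemma hasSum_iff_coeff {f : ℕ → MvPowerSeries ℕ ℝ} {g : MvPowerSeries ℕ ℝ} :
    HasSum f g ↔ ∀ d, HasSum (fun i => MvPowerSeries.coeff d (f i))
      (MvPowerSeries.coeff d g) :=
  Pi.hasSum

noncomputable instance : T2Space (MvPowerSeries ℕ ℝ) :=
  inferInstanceAs (T2Space ((ℕ →₀ ℕ) → ℝ))

lemma degree_add (a b : ℕ →₀ ℕ) :
    Finsupp.degree (a + b) = Finsupp.degree a + Finsupp.degree b := by
  simp [Finsupp.degree_eq_weight_one, map_add]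

lemma coeff_pow_zero {φ : MvPowerSeries ℕ ℝ}
    (hc : MvPowerSeries.constantCoeff (σ := ℕ) (R := ℝ) φ = 0) :
    ∀ (n : ℕ) (d : ℕ →₀ ℕ), Finsupp.degree d < n →
      MvPowerSeries.coeff d (φ ^ n) = 0 := by
  intro n
  induction n with
  | zero => intro d hd; omega
  | succ n ih =>
    intro d hd
    rw [pow_succ, MvPowerSeries.coeff_mul]
    refine Finset.sum_eq_zero fun p hp => ?_
    rw [Finset.HasAntidiagonal.mem_antidiagonal] at hp
    by_cases h2 : p.2 = 0
    · have : MvPowerSeries.coeff p.2 φ = 0 := by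
        rw [h2, MvPowerSeries.coeff_zero_eq_constantCoeff, hc]
      rw [this, mul_zero]
    · have hdeg : 1 ≤ Finsupp.degree p.2 := by
        rcases Nat.eq_zero_or_pos (Finsupp.degree p.2) with h | h
        · exact absurd ((Finsupp.degree_eq_zero_iff _).1 h) h2
        · exact h
      have : Finsupp.degree p.1 < n := by
        have := degree_add p.1 p.2
        rw [hp] at this
        omega
      rw [ih p.1 this, zero_mul]

lemma coeff_pow_mul_zero {φ ψ : MvPowerSeries ℕ ℝ}
    (hc : MvPowerSeries.constantCoeff (σ := ℕ) (R := ℝ) φ = 0) {n : ℕ} {d : ℕ →₀ ℕ}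
    (hd : Finsupp.degree d < n) :
    MvPowerSeries.coeff d (φ ^ n * ψ) = 0 := by
  rw [MvPowerSeries.coeff_mul]
  refine Finset.sum_eq_zero fun p hp => ?_
  rw [Finset.HasAntidiagonal.mem_antidiagonal] at hp
  have h1 : Finsupp.degree p.1 < n := by
    have := degree_add p.1 p.2
    rw [hp] at this
    omega
  rw [coeff_pow_zero hc n p.1 h1, zero_mul]

lemma tsum_coeff {f : ℕ → MvPowerSeries ℕ ℝ} {N : (ℕ →₀ ℕ) → ℕ}
    (h : ∀ d m, N d ≤ m → MvPowerSeries.coeff d (f m) = 0) (d : ℕ →₀ ℕ) :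
    MvPowerSeries.coeff d (∑' m, f m)
      = ∑ m ∈ Finset.range (N d), MvPowerSeries.coeff d (f m) := by
  have hs : HasSum f (fun e => ∑ m ∈ Finset.range (N e), MvPowerSeries.coeff e (f m)) := by
    refine hasSum_iff_coeff.2 ?_
    intro e
    show HasSum (fun i => MvPowerSeries.coeff e (f i))
      (∑ m ∈ Finset.range (N e), MvPowerSeries.coeff e (f m))
    apply hasSum_sum_of_ne_finset_zero
    intro m hm
    simp only [Finset.mem_range, not_lt] at hm
    exact h e m hm
  rw [hs.tsum_eq]
  rfl

lemma lemC (D : ℕ) (F : ℕ → ℝ) (hF : ∀ N, D < N → F N = 0) :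
    ∑ n ∈ Finset.range (D+1), ∑ m ∈ Finset.range (D+1),
      ((-1:ℝ)^n * (n.factorial:ℝ)⁻¹ * (m.factorial:ℝ)⁻¹) * F (n+m) = F 0 := by
  have step1 : ∀ n ∈ Finset.range (D+1),
      ∑ m ∈ Finset.range (D+1),
        ((-1:ℝ)^n * (n.factorial:ℝ)⁻¹ * (m.factorial:ℝ)⁻¹) * F (n+m)
      = ∑ m ∈ Finset.range (D+1-n),
        ((-1:ℝ)^n * (n.factorial:ℝ)⁻¹ * (m.factorial:ℝ)⁻¹) * F (n+m) := by
    intro n hn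
    symm
    apply Finset.sum_subset
    · intro m hm; simp only [Finset.mem_range] at hm ⊢; omega
    · intro m hm hm2
      simp only [Finset.mem_range, not_lt] at hm hm2
      rw [hF (n+m) (by omega), mul_zero]
  rw [Finset.sum_congr rfl step1]
  have step2 : ∑ n ∈ Finset.range (D+1), ∑ m ∈ Finset.range (D+1-n),
        ((-1:ℝ)^n * (n.factorial:ℝ)⁻¹ * (m.factorial:ℝ)⁻¹) * F (n+m)
      = ∑ N ∈ Finset.range (D+1), ∑ j ∈ Finset.range (N+1),
        ((-1:ℝ)^j * (j.factorial:ℝ)⁻¹ * ((N-j).factorial:ℝ)⁻¹) * F N := by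
    rw [Finset.sum_sigma', Finset.sum_sigma']
    apply Finset.sum_bij' (fun p _ => (⟨p.1 + p.2, p.1⟩ : Σ _ : ℕ, ℕ))
      (fun q _ => (⟨q.2, q.1 - q.2⟩ : Σ _ : ℕ, ℕ))
    · intro p hp
      simp only [Finset.mem_sigma, Finset.mem_range] at hp ⊢
      omega
    · intro q hq
      simp only [Finset.mem_sigma, Finset.mem_range] at hq ⊢
      obtain ⟨h1, h2⟩ := hq
      exact ⟨by omega, by omega⟩
    · intro p hp
      simp only [Finset.mem_sigma, Finset.mem_range] at hp
      simp
    · rintro ⟨N, j⟩ hq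
      simp only [Finset.mem_sigma, Finset.mem_range] at hq
      simp only [Sigma.mk.inj_iff, heq_eq_eq]
      refine ⟨?_, trivial⟩
      show j + (N - j) = N
      omega
    · intro p hp
      simp only [Finset.mem_sigma, Finset.mem_range] at hp
      simp only [Nat.add_sub_cancel_left]
  rw [step2]
  have inner : ∀ N ∈ Finset.range (D+1),
      ∑ j ∈ Finset.range (N+1),
        ((-1:ℝ)^j * (j.factorial:ℝ)⁻¹ * ((N-j).factorial:ℝ)⁻¹) * F N
      = (if N = 0 then (1:ℝ) else 0) * F N := by
    intro N _
    rw [← Finset.sum_mul]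
    congr 1
    have coeffeq : ∀ j ∈ Finset.range (N+1),
        (-1:ℝ)^j * (j.factorial:ℝ)⁻¹ * ((N-j).factorial:ℝ)⁻¹
        = ((-1:ℝ)^j * (N.choose j : ℝ)) * ((N.factorial:ℝ))⁻¹ := by
      intro j hj
      simp only [Finset.mem_range, Nat.lt_succ_iff] at hj
      have h := Nat.choose_mul_factorial_mul_factorial hj
      have hcast : (N.choose j : ℝ) * (j.factorial : ℝ) * ((N-j).factorial : ℝ)
          = (N.factorial : ℝ) := by exact_mod_cast congrArg (Nat.cast (R := ℝ)) h
      have h1 : (j.factorial : ℝ) ≠ 0 := Nat.cast_ne_zero.2 (Nat.factorial_ne_zero j)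
      have h2 : ((N-j).factorial : ℝ) ≠ 0 := Nat.cast_ne_zero.2 (Nat.factorial_ne_zero _)
      have h3 : (N.factorial : ℝ) ≠ 0 := Nat.cast_ne_zero.2 (Nat.factorial_ne_zero N)
      field_simp
      rw [← hcast]
      ring
    rw [Finset.sum_congr rfl coeffeq, ← Finset.sum_mul]
    have hcast : ∑ j ∈ Finset.range (N+1), (-1:ℝ)^j * (N.choose j : ℝ)
        = (if N = 0 then (1:ℝ) else 0) := by
      by_cases hN : N = 0
      · subst hN; simp
      · rw [if_neg hN]
        have h0 : ((∑ i ∈ Finset.range (N+1), (-1:ℤ)^i * (N.choose i : ℤ) : ℤ) : ℝ) = 0 := by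
          rw [Int.alternating_sum_range_choose_of_ne hN]; simp
        push_cast at h0
        exact h0
    rw [hcast]
    by_cases hN : N = 0
    · subst hN; simp
    · simp [hN]
  rw [Finset.sum_congr rfl inner]
  have : ∀ N ∈ Finset.range (D+1), (if N = 0 then (1:ℝ) else 0) * F N
      = if N = 0 then F N else 0 := by
    intro N _
    by_cases hN : N = 0 <;> simp [hN]
  rw [Finset.sum_congr rfl this, Finset.sum_ite_eq' (Finset.range (D+1)) 0 F]
  simp

/-- If `I₀` is the (unique, zero-constant-term) solution of
`I₀ = ∑_{n≥0} t_n I₀^n/n!` and `I_k = ∑_{n≥0} t_{n+k} I₀^n/n!` for `k ≥ 1`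
(the formula also recovers `I₀` at `k = 0`), then
`t_k = ∑_{n≥0} ((-1)^n I₀^n/n!) I_{n+k}` for every `k ≥ 0`. -/
theorem t_in_terms_of_I (I0 : MvPowerSeries ℕ ℝ)
    (hc : MvPowerSeries.constantCoeff (σ := ℕ) (R := ℝ) I0 = 0)
    (hfix : I0 = ∑' n : ℕ, ((n.factorial : ℝ))⁻¹ • (MvPowerSeries.X n * I0 ^ n))
    (I : ℕ → MvPowerSeries ℕ ℝ)
    (hI : ∀ k, I k = ∑' n : ℕ, ((n.factorial : ℝ))⁻¹ •
        (MvPowerSeries.X (n + k) * I0 ^ n)) :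
    ∀ k : ℕ, MvPowerSeries.X k
      = ∑' n : ℕ, ((-1 : ℝ) ^ n * ((n.factorial : ℝ))⁻¹) • (I0 ^ n * I (n + k)) := by
  intro k
  have hXmul : ∀ (j m : ℕ) (d : ℕ →₀ ℕ), Finsupp.degree d < m →
      MvPowerSeries.coeff d (MvPowerSeries.X j * I0 ^ m) = 0 := by
    intro j m d hd
    rw [mul_comm]
    exact coeff_pow_mul_zero hc hd
  -- finite coefficient formula for I j
  have hIc : ∀ (j : ℕ) (d : ℕ →₀ ℕ) (M : ℕ), Finsupp.degree d ≤ M →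
      MvPowerSeries.coeff d (I j)
        = ∑ m ∈ Finset.range (M + 1),
            (m.factorial : ℝ)⁻¹ *
              MvPowerSeries.coeff d (MvPowerSeries.X (m + j) * I0 ^ m) := by
    intro j d M hM
    rw [hI j, tsum_coeff (N := fun e => Finsupp.degree e + 1)
      (fun e m hm => by
        have hm' : Finsupp.degree e + 1 ≤ m := hm
        rw [map_smul, smul_eq_mul, hXmul (m + j) m e (by omega), mul_zero]) d]
    have hsub : Finset.range (Finsupp.degree d + 1) ⊆ Finset.range (M + 1) :=
      Finset.range_subset_range.2 (by omega)
    rw [Finset.sum_subset hsub (fun m hm hm2 => by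
      simp only [Finset.mem_range] at hm hm2
      rw [map_smul, smul_eq_mul, hXmul (m + j) m d (by omega), mul_zero])]
    refine Finset.sum_congr rfl fun m _ => ?_
    rw [map_smul, smul_eq_mul]
  have hprod : ∀ n m : ℕ,
      I0 ^ n * (MvPowerSeries.X (m + (n + k)) * I0 ^ m)
        = MvPowerSeries.X ((n + m) + k) * I0 ^ (n + m) := by
    intro n m
    rw [show m + (n + k) = (n + m) + k by omega]
    ring
  have key : HasSum
      (fun n : ℕ => ((-1 : ℝ) ^ n * ((n.factorial : ℝ))⁻¹) • (I0 ^ n * I (n + k)))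
      (MvPowerSeries.X k) := by
    rw [hasSum_iff_coeff]
    intro d
    set D := Finsupp.degree d with hD
    set F : ℕ → ℝ := fun N => MvPowerSeries.coeff d (MvPowerSeries.X (N + k) * I0 ^ N)
      with hF
    have hF0 : ∀ N, D < N → F N = 0 := fun N hN => hXmul (N + k) N d hN
    have hfin : MvPowerSeries.coeff d (MvPowerSeries.X k)
        = ∑ n ∈ Finset.range (D + 1), MvPowerSeries.coeff d
            (((-1 : ℝ) ^ n * ((n.factorial : ℝ))⁻¹) • (I0 ^ n * I (n + k))) := by
      have main : ∑ n ∈ Finset.range (D + 1), MvPowerSeries.coeff d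
            (((-1 : ℝ) ^ n * ((n.factorial : ℝ))⁻¹) • (I0 ^ n * I (n + k)))
          = ∑ n ∈ Finset.range (D + 1), ∑ m ∈ Finset.range (D + 1),
              ((-1 : ℝ) ^ n * (n.factorial : ℝ)⁻¹ * (m.factorial : ℝ)⁻¹) * F (n + m) := by
        refine Finset.sum_congr rfl fun n _ => ?_
        rw [map_smul, smul_eq_mul, MvPowerSeries.coeff_mul]
        have hin : ∀ p ∈ Finset.HasAntidiagonal.antidiagonal d,
            MvPowerSeries.coeff p.1 (I0 ^ n) * MvPowerSeries.coeff p.2 (I (n + k))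
            = ∑ m ∈ Finset.range (D + 1),
                (m.factorial : ℝ)⁻¹ * (MvPowerSeries.coeff p.1 (I0 ^ n) *
                  MvPowerSeries.coeff p.2 (MvPowerSeries.X (m + (n + k)) * I0 ^ m)) := by
          intro p hp
          rw [Finset.HasAntidiagonal.mem_antidiagonal] at hp
          have hdeg : Finsupp.degree p.2 ≤ D := by
            have := degree_add p.1 p.2
            rw [hp] at this
            omega
          rw [hIc (n + k) p.2 D hdeg, Finset.mul_sum]
          exact Finset.sum_congr rfl fun m _ => by ring
        rw [Finset.sum_congr rfl hin, Finset.sum_comm, Finset.mul_sum]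
        refine Finset.sum_congr rfl fun m _ => ?_
        rw [← Finset.mul_sum, ← MvPowerSeries.coeff_mul, hprod n m]
        show ((-1 : ℝ) ^ n * (n.factorial : ℝ)⁻¹) * ((m.factorial : ℝ)⁻¹ * F (n + m)) = _
        ring
      rw [main, lemC D F hF0]
      show _ = MvPowerSeries.coeff d (MvPowerSeries.X (0 + k) * I0 ^ 0)
      rw [pow_zero, mul_one, Nat.zero_add]
    rw [hfin]
    apply hasSum_sum_of_ne_finset_zero
    intro n hn
    simp only [Finset.mem_range, not_lt] at hn
    rw [map_smul, smul_eq_mul, coeff_pow_mul_zero hc (by omega), mul_zero]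
  exact key.tsum_eq.symm
end

section
/- With I_0 the fixed point of I_0 = ∑_{n≥0} t_n I_0^n/n! and I_k = ∑_{n≥0} t_{n+k} I_0^n/n!, the identity ∑_{n≥0} (t_n − δ_{n,1}) I_0^{n+1}/(n+1)! = ∑_{k≥0} ((-1)^k/(k+1)!) (I_k + δ_{k,1}) I_0^{k+1} holds as formal power series. -/
open MvPowerSeries Finset

private lemma degree_add' (p q : ℕ →₀ ℕ) :
    (p + q).degree = p.degree + q.degree := by
  simp [Finsupp.degree_eq_weight_one, map_add]

private lemma coeff_pow_zero_s7 (f : MvPowerSeries ℕ ℝ) (hc : constantCoeff f = 0) :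
    ∀ (n : ℕ) (d : ℕ →₀ ℕ), d.degree < n → coeff d (f ^ n) = 0 := by
  intro n
  induction n with
  | zero => intro d h; omega
  | succ n ih =>
    intro d hd
    rw [pow_succ']
    rw [coeff_mul]
    apply Finset.sum_eq_zero
    rintro ⟨p, q⟩ hp
    rw [Finset.HasAntidiagonal.mem_antidiagonal] at hp
    by_cases h0 : p = 0
    · subst h0
      simp [coeff_zero_eq_constantCoeff, hc]
    · have h1 : 1 ≤ p.degree := by
        rcases Nat.eq_zero_or_pos p.degree with h | h
        · exact absurd ((Finsupp.degree_eq_zero_iff p).mp h) h0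
        · exact h
      have h2 : q.degree < n := by
        have h3 := degree_add' p q
        rw [hp] at h3
        omega
      simp [ih q h2]

private lemma coeff_mul_pow_zero (f g : MvPowerSeries ℕ ℝ) (hc : constantCoeff f = 0)
    {n : ℕ} {d : ℕ →₀ ℕ} (h : d.degree < n) : coeff d (g * f ^ n) = 0 := by
  rw [coeff_mul]
  apply Finset.sum_eq_zero
  rintro ⟨p, q⟩ hp
  rw [Finset.HasAntidiagonal.mem_antidiagonal] at hp
  have h2 : q.degree < n := by
    have h3 := degree_add' p q
    rw [hp] at h3
    omega
  simp [coeff_pow_zero_s7 f hc n q h2]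

private lemma coeff_tsum (F : ℕ → MvPowerSeries ℕ ℝ)
    (h : ∀ (d : ℕ →₀ ℕ) (n : ℕ), d.degree < n → coeff d (F n) = 0)
    (d : ℕ →₀ ℕ) {M : ℕ} (hM : d.degree < M) :
    coeff d (∑' n, F n) = ∑ n ∈ Finset.range M, coeff d (F n) := by
  have hsum : Summable F := by
    apply Pi.summable.mpr
    intro x
    apply summable_of_ne_finset_zero (s := Finset.range (x.degree + 1))
    intro n hn
    exact h x n (by simpa using hn)
  have h1 : HasSum (fun n => coeff d (F n)) (coeff d (∑' n, F n)) :=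
    (Pi.hasSum.mp hsum.hasSum) d
  have h2 : HasSum (fun n => coeff d (F n)) (∑ n ∈ Finset.range M, coeff d (F n)) := by
    apply hasSum_sum_of_ne_finset_zero
    intro n hn
    exact h d n (lt_of_lt_of_le hM (by simpa using hn))
  exact h1.unique h2

private lemma choose_inv (m k : ℕ) (hk : k ≤ m) :
    (((k+1).factorial : ℝ))⁻¹ * (((m-k).factorial : ℝ))⁻¹
      = ((m+1).choose (k+1) : ℝ) * (((m+1).factorial : ℝ))⁻¹ := by
  have h := Nat.choose_mul_factorial_mul_factorial (Nat.succ_le_succ hk)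
  have h2 : (m+1) - (k+1) = m - k := by omega
  rw [h2] at h
  have h' : ((m+1).choose (k+1) : ℝ) * ((k+1).factorial : ℝ) * ((m-k).factorial : ℝ)
      = ((m+1).factorial : ℝ) := by exact_mod_cast congrArg (Nat.cast (R := ℝ)) h
  have hf1 : ((k+1).factorial : ℝ) ≠ 0 := Nat.cast_ne_zero.mpr (Nat.factorial_ne_zero _)
  have hf2 : ((m-k).factorial : ℝ) ≠ 0 := Nat.cast_ne_zero.mpr (Nat.factorial_ne_zero _)
  have hf3 : ((m+1).factorial : ℝ) ≠ 0 := Nat.cast_ne_zero.mpr (Nat.factorial_ne_zero _)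
  field_simp
  linear_combination -h'

private lemma alt_sum (m : ℕ) :
    ∑ k ∈ Finset.range (m+1),
        (-1:ℝ)^k * (((k+1).factorial : ℝ))⁻¹ * (((m - k).factorial : ℝ))⁻¹
      = (((m+1).factorial : ℝ))⁻¹ := by
  have key : ∑ k ∈ Finset.range (m+1), (-1:ℝ)^k * ((m+1).choose (k+1) : ℝ) = 1 := by
    have h := Int.alternating_sum_range_choose (n := m+1)
    rw [if_neg (Nat.succ_ne_zero m), Finset.sum_range_succ'] at h
    have e : ∀ i, (-1:ℤ)^(i+1) * ((m+1).choose (i+1) : ℤ)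
        = -((-1)^i * ((m+1).choose (i+1) : ℤ)) := by intro i; ring
    rw [Finset.sum_congr rfl (fun i _ => e i), Finset.sum_neg_distrib] at h
    simp only [pow_zero, Nat.choose_zero_right, Nat.cast_one, one_mul] at h
    have h2 : ∑ k ∈ Finset.range (m+1), (-1:ℤ)^k * ((m+1).choose (k+1) : ℤ) = 1 := by
      linarith
    exact_mod_cast h2
  calc ∑ k ∈ Finset.range (m+1),
        (-1:ℝ)^k * (((k+1).factorial : ℝ))⁻¹ * (((m - k).factorial : ℝ))⁻¹
      = ∑ k ∈ Finset.range (m+1),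
          ((-1:ℝ)^k * ((m+1).choose (k+1) : ℝ)) * (((m+1).factorial : ℝ))⁻¹ := by
        apply Finset.sum_congr rfl
        intro k hk
        rw [mul_assoc, choose_inv m k (Nat.lt_succ_iff.mp (Finset.mem_range.mp hk))]
        ring
    _ = (∑ k ∈ Finset.range (m+1), (-1:ℝ)^k * ((m+1).choose (k+1) : ℝ))
          * (((m+1).factorial : ℝ))⁻¹ := by rw [← Finset.sum_mul]
    _ = (((m+1).factorial : ℝ))⁻¹ := by rw [key, one_mul]

private lemma sum_pairs (M : ℕ) (F : ℕ → ℕ → ℝ) (hF : ∀ k n, M ≤ k + n + 1 → F k n = 0) :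
    ∑ k ∈ Finset.range M, ∑ n ∈ Finset.range M, F k n
      = ∑ m ∈ Finset.range M, ∑ k ∈ Finset.range (m+1), F k (m-k) := by
  rw [← Finset.sum_product', Finset.sum_sigma']
  apply Finset.sum_bij_ne_zero (i := fun p _ _ => (⟨p.1 + p.2, p.1⟩ : (_ : ℕ) × ℕ))
  · rintro ⟨k, n⟩ h1 h2
    simp only [Finset.mem_sigma, Finset.mem_range]
    constructor
    · by_contra hcon
      exact h2 (hF k n (by omega))
    · omega
  · rintro ⟨k1, n1⟩ _ _ ⟨k2, n2⟩ _ _ heq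
    simp only [Sigma.mk.inj_iff, heq_eq_eq] at heq
    have : k1 = k2 := heq.2
    have : n1 = n2 := by omega
    simp_all
  · rintro ⟨m, k⟩ hb hgb
    simp only [Finset.mem_sigma, Finset.mem_range] at hb
    refine ⟨(k, m - k), ?_, ?_, ?_⟩
    · simp only [Finset.mem_product, Finset.mem_range]; omega
    · simpa using hgb
    · simp only
      congr 1
      omega
  · rintro ⟨k, n⟩ _ _
    simp [Nat.add_sub_cancel_left]

private lemma key_sum (M : ℕ) (a : ℕ → ℝ) (e : ℝ) (ha : ∀ m, M ≤ m + 1 → a m = 0) :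
    ∑ n ∈ Finset.range M, (((n+1).factorial : ℝ))⁻¹ * (a n - if n = 1 then e else 0)
      = ∑ k ∈ Finset.range M, ((-1:ℝ)^k * (((k+1).factorial : ℝ))⁻¹) *
          ((∑ n ∈ Finset.range M, ((n.factorial : ℝ))⁻¹ * a (n+k)) + if k = 1 then e else 0) := by
  have hAB : ∑ n ∈ Finset.range M, (((n+1).factorial : ℝ))⁻¹ * a n
      = ∑ k ∈ Finset.range M, ((-1:ℝ)^k * (((k+1).factorial : ℝ))⁻¹) *
          ∑ n ∈ Finset.range M, ((n.factorial : ℝ))⁻¹ * a (n+k) := by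
    have hrhs : ∑ k ∈ Finset.range M, ((-1:ℝ)^k * (((k+1).factorial : ℝ))⁻¹) *
          ∑ n ∈ Finset.range M, ((n.factorial : ℝ))⁻¹ * a (n+k)
        = ∑ k ∈ Finset.range M, ∑ n ∈ Finset.range M,
            ((-1:ℝ)^k * (((k+1).factorial : ℝ))⁻¹) * (((n.factorial : ℝ))⁻¹ * a (n+k)) := by
      apply Finset.sum_congr rfl
      intro k _
      rw [Finset.mul_sum]
    rw [hrhs, sum_pairs M _ (by
      intro k n hkn
      rw [ha (n+k) (by omega)]
      ring)]
    apply Finset.sum_congr rfl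
    intro m hm
    have step : ∀ k ∈ Finset.range (m+1),
        ((-1:ℝ)^k * (((k+1).factorial : ℝ))⁻¹) * ((((m-k).factorial : ℝ))⁻¹ * a (m - k + k))
          = ((-1:ℝ)^k * (((k+1).factorial : ℝ))⁻¹ * (((m-k).factorial : ℝ))⁻¹) * a m := by
      intro k hk
      rw [Nat.sub_add_cancel (Nat.lt_succ_iff.mp (Finset.mem_range.mp hk))]
      ring
    rw [Finset.sum_congr rfl step, ← Finset.sum_mul, alt_sum m]
  simp only [mul_sub, mul_add, Finset.sum_sub_distrib, Finset.sum_add_distrib, mul_ite,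
    mul_zero]
  rw [hAB]
  rw [Finset.sum_ite_eq' (Finset.range M) 1, Finset.sum_ite_eq' (Finset.range M) 1]
  split_ifs <;> ring

/-- With `I₀` the fixed point of `I₀ = ∑ t_n I₀^n/n!` and
`I_k = ∑_{n≥0} t_{n+k} I₀^n/n!`, one has
`∑_{n≥0} (t_n − δ_{n,1}) I₀^{n+1}/(n+1)! = ∑_{k≥0} ((−1)^k/(k+1)!) (I_k + δ_{k,1}) I₀^{k+1}`. -/
theorem action_value_in_I (I0 : MvPowerSeries ℕ ℝ)
    (hc : MvPowerSeries.constantCoeff I0 = 0)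
    (hfix : I0 = ∑' n : ℕ, ((n.factorial : ℝ))⁻¹ • (MvPowerSeries.X n * I0 ^ n))
    (I : ℕ → MvPowerSeries ℕ ℝ)
    (hI : ∀ k, I k = ∑' n : ℕ, ((n.factorial : ℝ))⁻¹ •
        (MvPowerSeries.X (n + k) * I0 ^ n)) :
    ∑' n : ℕ, (((n + 1).factorial : ℝ))⁻¹ •
        ((MvPowerSeries.X n - if n = 1 then 1 else 0) * I0 ^ (n + 1))
      = ∑' k : ℕ, ((-1 : ℝ) ^ k * (((k + 1).factorial : ℝ))⁻¹) •
          ((I k + if k = 1 then 1 else 0) * I0 ^ (k + 1)) := by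
  classical
  apply MvPowerSeries.ext
  intro d
  set N := d.degree with hN
  set a : ℕ → ℝ := fun m => coeff d (X m * I0 ^ (m+1)) with haa
  set e : ℝ := coeff d (I0 ^ 2) with hee
  have hL : ∀ (dd : ℕ →₀ ℕ) (n : ℕ), dd.degree < n →
      coeff dd ((((n+1).factorial : ℝ))⁻¹ •
        ((X n - if n = 1 then 1 else 0) * I0 ^ (n+1))) = 0 := by
    intro dd n hn
    rw [coeff_smul, coeff_mul_pow_zero I0 _ hc (Nat.lt_succ_of_lt hn), mul_zero]
  have hR : ∀ (dd : ℕ →₀ ℕ) (k : ℕ), dd.degree < k →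
      coeff dd (((-1:ℝ)^k * (((k+1).factorial : ℝ))⁻¹) •
        ((I k + if k = 1 then 1 else 0) * I0 ^ (k+1))) = 0 := by
    intro dd k hk
    rw [coeff_smul, coeff_mul_pow_zero I0 _ hc (Nat.lt_succ_of_lt hk), mul_zero]
  rw [coeff_tsum _ hL d (Nat.lt_succ_self N), coeff_tsum _ hR d (Nat.lt_succ_self N)]
  have hIk : ∀ k, coeff d (I k * I0 ^ (k+1))
      = ∑ n ∈ Finset.range (N+1), ((n.factorial : ℝ))⁻¹ * a (n+k) := by
    intro k
    rw [coeff_mul]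
    have step : ∀ p ∈ antidiagonal d, coeff p.1 (I k) * coeff p.2 (I0 ^ (k+1))
        = ∑ n ∈ Finset.range (N+1), ((n.factorial : ℝ))⁻¹ *
            (coeff p.1 (X (n+k) * I0 ^ n) * coeff p.2 (I0 ^ (k+1))) := by
      intro p hp
      have hdeg : p.1.degree < N + 1 := by
        have h3 := degree_add' p.1 p.2
        rw [Finset.HasAntidiagonal.mem_antidiagonal.mp hp] at h3
        omega
      rw [hI k, coeff_tsum _ (by
        intro dd n hn
        rw [coeff_smul, coeff_mul_pow_zero I0 _ hc hn, mul_zero]) p.1 hdeg,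
        Finset.sum_mul]
      apply Finset.sum_congr rfl
      intro n _
      rw [coeff_smul]
      ring
    rw [Finset.sum_congr rfl step, Finset.sum_comm]
    apply Finset.sum_congr rfl
    intro n _
    rw [← Finset.mul_sum, ← coeff_mul]
    congr 2
    rw [mul_assoc, ← pow_add, ← add_assoc]
  have lhs_eq : ∀ n, coeff d ((((n+1).factorial : ℝ))⁻¹ •
      ((X n - if n = 1 then 1 else 0) * I0 ^ (n+1)))
      = (((n+1).factorial : ℝ))⁻¹ * (a n - if n = 1 then e else 0) := by
    intro n
    rw [coeff_smul, sub_mul, map_sub]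
    congr 2
    by_cases hn : n = 1
    · subst hn; simp [hee]
    · simp [hn]
  have rhs_eq : ∀ k, coeff d (((-1:ℝ)^k * (((k+1).factorial : ℝ))⁻¹) •
      ((I k + if k = 1 then 1 else 0) * I0 ^ (k+1)))
      = ((-1:ℝ)^k * (((k+1).factorial : ℝ))⁻¹) *
          ((∑ n ∈ Finset.range (N+1), ((n.factorial : ℝ))⁻¹ * a (n+k))
            + if k = 1 then e else 0) := by
    intro k
    rw [coeff_smul, add_mul, map_add, hIk k]
    congr 2
    by_cases hk : k = 1
    · subst hk; simp [hee]
    · simp [hk]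
  rw [Finset.sum_congr rfl (fun n _ => lhs_eq n), Finset.sum_congr rfl (fun k _ => rhs_eq k)]
  apply key_sum (N+1) a e
  intro m hm
  exact coeff_mul_pow_zero I0 _ hc (by omega)
end

section
/- With I_0 and I_k as above, the partial derivative of I_0 with respect to t_k satisfies ∂I_0/∂t_k = (1/(1−I_1)) · I_0^k/k!, as an identity of formal power series. -/
open MvPowerSeries

/-- Formal partial derivative `∂/∂t_k` of a multivariate formal power series. -/
noncomputable def pderivMv (k : ℕ) (f : MvPowerSeries ℕ ℝ) : MvPowerSeries ℕ ℝ :=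
  fun d => ((d k : ℝ) + 1) * MvPowerSeries.coeff (d + Finsupp.single k 1) f

namespace PderivAux

instance : T2Space (MvPowerSeries ℕ ℝ) := inferInstanceAs (T2Space ((ℕ →₀ ℕ) → ℝ))
instance : IsTopologicalAddGroup (MvPowerSeries ℕ ℝ) :=
  inferInstanceAs (IsTopologicalAddGroup ((ℕ →₀ ℕ) → ℝ))

/-- total degree of an exponent -/
def deg (d : ℕ →₀ ℕ) : ℕ := d.sum fun _ m => m

lemma deg_add (a b : ℕ →₀ ℕ) : deg (a + b) = deg a + deg b :=
  Finsupp.sum_add_index' (fun _ => rfl) (fun _ _ _ => rfl)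

lemma deg_eq_zero {d : ℕ →₀ ℕ} (h : deg d = 0) : d = 0 := by
  classical
  rw [deg, Finsupp.sum, Finset.sum_eq_zero_iff] at h
  ext a
  by_cases hs : a ∈ d.support
  · exact h a hs
  · simpa using Finsupp.notMem_support_iff.mp hs

lemma deg_mono {a b : ℕ →₀ ℕ} (h : a ≤ b) : deg a ≤ deg b := by
  have : a + (b - a) = b := add_tsub_cancel_of_le h
  calc deg a ≤ deg a + deg (b - a) := Nat.le_add_right _ _
    _ = deg b := by rw [← deg_add, this]

lemma deg_single (k : ℕ) : deg (Finsupp.single k 1) = 1 := by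
  simp [deg, Finsupp.sum_single_index]

end PderivAux
section B
open PderivAux Finset

lemma coeff_pderiv (k : ℕ) (f : MvPowerSeries ℕ ℝ) (d : ℕ →₀ ℕ) :
    MvPowerSeries.coeff d (pderivMv k f)
      = ((d k : ℝ) + 1) * MvPowerSeries.coeff (d + Finsupp.single k 1) f := rfl

lemma coeff_pow_eq_zero {f : MvPowerSeries ℕ ℝ}
    (hf : MvPowerSeries.constantCoeff f = 0) :
    ∀ n (d : ℕ →₀ ℕ), deg d < n → MvPowerSeries.coeff d (f ^ n) = 0 := by
  intro n
  induction n with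
  | zero => exact fun d h => absurd h (Nat.not_lt_zero _)
  | succ n ih =>
    intro d h
    rw [pow_succ, MvPowerSeries.coeff_mul]
    apply Finset.sum_eq_zero
    rintro ⟨a, b⟩ hab
    rw [Finset.HasAntidiagonal.mem_antidiagonal] at hab
    by_cases hb : b = 0
    · subst hb
      have : MvPowerSeries.coeff 0 f = 0 := by
        rwa [MvPowerSeries.coeff_zero_eq_constantCoeff]
      simp [this]
    · have hb1 : 1 ≤ deg b := by
        rcases Nat.eq_zero_or_pos (deg b) with h0 | h0
        · exact absurd (deg_eq_zero h0) hb
        · exact h0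
      have ha : deg a < n := by
        have hd : deg a + deg b = deg d := by rw [← deg_add, hab]
        omega
      rw [ih a ha, zero_mul]

lemma coeff_X_mul' (n : ℕ) (g : MvPowerSeries ℕ ℝ) (d : ℕ →₀ ℕ) :
    MvPowerSeries.coeff d (MvPowerSeries.X n * g)
      = if Finsupp.single n 1 ≤ d
          then MvPowerSeries.coeff (d - Finsupp.single n 1) g else 0 := by
  classical
  rw [MvPowerSeries.coeff_mul]
  by_cases h : Finsupp.single n 1 ≤ d
  · rw [if_pos h]
    rw [Finset.sum_eq_single (Finsupp.single n 1, d - Finsupp.single n 1)]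
    · simp [MvPowerSeries.coeff_X]
    · rintro ⟨a, b⟩ hab hne
      rw [Finset.HasAntidiagonal.mem_antidiagonal] at hab
      rcases eq_or_ne a (Finsupp.single n 1) with rfl | ha
      · exfalso
        apply hne
        have : b = d - Finsupp.single n 1 := by
          rw [← hab, add_tsub_cancel_left]
        rw [this]
      · simp [MvPowerSeries.coeff_X, ha]
    · intro hmem
      exfalso
      exact hmem (Finset.HasAntidiagonal.mem_antidiagonal.mpr (add_tsub_cancel_of_le h))
  · rw [if_neg h]
    apply Finset.sum_eq_zero
    rintro ⟨a, b⟩ hab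
    rw [Finset.HasAntidiagonal.mem_antidiagonal] at hab
    rcases eq_or_ne a (Finsupp.single n 1) with rfl | ha
    · exact absurd (hab ▸ le_self_add) h
    · simp [MvPowerSeries.coeff_X, ha]

lemma coeff_pow_mul_eq_zero {f : MvPowerSeries ℕ ℝ}
    (hf : MvPowerSeries.constantCoeff f = 0) (g : MvPowerSeries ℕ ℝ)
    {n : ℕ} {d : ℕ →₀ ℕ} (h : deg d < n) :
    MvPowerSeries.coeff d (f ^ n * g) = 0 := by
  rw [MvPowerSeries.coeff_mul]
  apply Finset.sum_eq_zero
  rintro ⟨a, b⟩ hab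
  rw [Finset.HasAntidiagonal.mem_antidiagonal] at hab
  have ha : deg a < n := by
    have : deg a + deg b = deg d := by rw [← deg_add, hab]
    omega
  rw [coeff_pow_eq_zero hf n a ha, zero_mul]

end B
section C
open PderivAux Finset

lemma sum_antidiag_swap (m : ℕ →₀ ℕ) (H : (ℕ →₀ ℕ) → (ℕ →₀ ℕ) → ℝ) :
    ∑ p ∈ Finset.HasAntidiagonal.antidiagonal m, H p.1 p.2 = ∑ p ∈ Finset.HasAntidiagonal.antidiagonal m, H p.2 p.1 := by
  apply Finset.sum_nbij' (fun p => (p.2, p.1)) (fun p => (p.2, p.1)) <;>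
    simp +contextual [Finset.HasAntidiagonal.mem_antidiagonal, add_comm]

lemma sum_shift (k : ℕ) (d : ℕ →₀ ℕ) (F G : (ℕ →₀ ℕ) → ℝ) :
    ∑ p ∈ Finset.HasAntidiagonal.antidiagonal (d + Finsupp.single k 1),
        (((p.1 : ℕ →₀ ℕ) k : ℕ) : ℝ) * F p.1 * G p.2
      = ∑ q ∈ Finset.HasAntidiagonal.antidiagonal d,
          (((q.1 : ℕ →₀ ℕ) k : ℕ) + 1 : ℝ) * F (q.1 + Finsupp.single k 1) * G q.2 := by
  classical
  set e := Finsupp.single k 1 with he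
  have h1 : ∑ p ∈ Finset.HasAntidiagonal.antidiagonal (d + e), (p.1 k : ℝ) * F p.1 * G p.2
      = ∑ p ∈ (Finset.HasAntidiagonal.antidiagonal (d + e)).filter (fun p => p.1 k ≠ 0),
          (p.1 k : ℝ) * F p.1 * G p.2 := by
    refine (Finset.sum_filter_of_ne ?_).symm
    intro p _ h0 hk0
    apply h0
    rw [hk0]
    simp
  rw [h1]
  apply Finset.sum_nbij' (fun p => (p.1 - e, p.2)) (fun q => (q.1 + e, q.2))
  · rintro ⟨a, b⟩ hab
    rw [Finset.mem_filter, Finset.HasAntidiagonal.mem_antidiagonal] at hab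
    obtain ⟨hab, hk⟩ := hab
    dsimp only at hk
    have hle : e ≤ a := by
      rw [he, Finsupp.single_le_iff]
      omega
    rw [Finset.HasAntidiagonal.mem_antidiagonal]
    have : (a - e) + b + e = d + e := by
      rw [add_right_comm, tsub_add_cancel_of_le hle, hab]
    exact add_right_cancel this
  · rintro ⟨a, b⟩ hab
    rw [Finset.HasAntidiagonal.mem_antidiagonal] at hab
    rw [Finset.mem_filter, Finset.HasAntidiagonal.mem_antidiagonal]
    refine ⟨by dsimp only; rw [add_right_comm, hab], by
      dsimp only
      rw [he, Finsupp.add_apply, Finsupp.single_eq_same]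
      omega⟩
  · rintro ⟨a, b⟩ hab
    rw [Finset.mem_filter, Finset.HasAntidiagonal.mem_antidiagonal] at hab
    obtain ⟨hab1, hk⟩ := hab
    dsimp only at hk
    have hle : e ≤ a := by
      rw [he, Finsupp.single_le_iff]
      omega
    simp [tsub_add_cancel_of_le hle]
  · rintro ⟨a, b⟩ _
    simp
  · rintro ⟨a, b⟩ hab
    rw [Finset.mem_filter, Finset.HasAntidiagonal.mem_antidiagonal] at hab
    obtain ⟨hab, hk⟩ := hab
    dsimp only at hk
    have hle : e ≤ a := by
      rw [he, Finsupp.single_le_iff]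
      omega
    dsimp only
    rw [tsub_add_cancel_of_le hle]
    congr 2
    have hak : (a - e) k = a k - 1 := by
      rw [he, Finsupp.tsub_apply, Finsupp.single_eq_same]
    rw [hak]
    have : 1 ≤ a k := by omega
    push_cast [this]
    ring

lemma pderiv_mul (k : ℕ) (f g : MvPowerSeries ℕ ℝ) :
    pderivMv k (f * g) = pderivMv k f * g + f * pderivMv k g := by
  classical
  funext d
  set e := Finsupp.single k 1 with he
  show ((d k : ℝ) + 1) * MvPowerSeries.coeff (d + e) (f * g)
      = MvPowerSeries.coeff d (pderivMv k f * g)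
        + MvPowerSeries.coeff d (f * pderivMv k g)
  rw [MvPowerSeries.coeff_mul, MvPowerSeries.coeff_mul, MvPowerSeries.coeff_mul,
    Finset.mul_sum]
  have key : ∀ p ∈ Finset.HasAntidiagonal.antidiagonal (d + e),
      ((d k : ℝ) + 1) * (MvPowerSeries.coeff p.1 f * MvPowerSeries.coeff p.2 g)
        = (p.1 k : ℝ) * MvPowerSeries.coeff p.1 f * MvPowerSeries.coeff p.2 g
          + (p.2 k : ℝ) * MvPowerSeries.coeff p.2 g * MvPowerSeries.coeff p.1 f := by
    rintro ⟨a, b⟩ hab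
    rw [Finset.HasAntidiagonal.mem_antidiagonal] at hab
    have hk : a k + b k = d k + 1 := by
      have := congrArg (fun x => x k) hab
      simpa [he, Finsupp.add_apply, Finsupp.single_eq_same] using this
    have hcast : (a k : ℝ) + (b k : ℝ) = (d k : ℝ) + 1 := by
      exact_mod_cast hk
    rw [← hcast]
    ring
  rw [Finset.sum_congr rfl key, Finset.sum_add_distrib]
  congr 1
  · rw [sum_shift k d (fun a => MvPowerSeries.coeff a f) (fun b => MvPowerSeries.coeff b g)]
    apply Finset.sum_congr rfl
    rintro ⟨a, b⟩ _
    rw [coeff_pderiv]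
  · rw [sum_antidiag_swap (d + e)
      (fun x y => (y k : ℝ) * MvPowerSeries.coeff y g * MvPowerSeries.coeff x f)]
    rw [sum_shift k d (fun a => MvPowerSeries.coeff a g) (fun b => MvPowerSeries.coeff b f)]
    rw [sum_antidiag_swap d
      (fun x y => ((x k : ℝ) + 1) * MvPowerSeries.coeff (x + e) g * MvPowerSeries.coeff y f)]
    apply Finset.sum_congr rfl
    rintro ⟨a, b⟩ _
    rw [coeff_pderiv]
    ring

end C
section D
open PderivAux

lemma pderiv_smul (k : ℕ) (c : ℝ) (f : MvPowerSeries ℕ ℝ) :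
    pderivMv k (c • f) = c • pderivMv k f := by
  funext d
  show ((d k : ℝ) + 1) * MvPowerSeries.coeff (d + Finsupp.single k 1) (c • f)
    = c * (((d k : ℝ) + 1) * MvPowerSeries.coeff (d + Finsupp.single k 1) f)
  rw [MvPowerSeries.coeff_smul]
  ring

lemma pderiv_one (k : ℕ) : pderivMv k (1 : MvPowerSeries ℕ ℝ) = 0 := by
  classical
  funext d
  show ((d k : ℝ) + 1) * MvPowerSeries.coeff (d + Finsupp.single k 1) 1 = 0
  rw [MvPowerSeries.coeff_one]
  have : d + Finsupp.single k 1 ≠ 0 := by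
    intro h
    have := congrArg (fun x => x k) h
    simp [Finsupp.add_apply, Finsupp.single_eq_same] at this
  rw [if_neg this, mul_zero]

lemma pderiv_X (k n : ℕ) :
    pderivMv k (MvPowerSeries.X n : MvPowerSeries ℕ ℝ)
      = if n = k then 1 else 0 := by
  classical
  funext d
  show ((d k : ℝ) + 1) * MvPowerSeries.coeff (d + Finsupp.single k 1) (MvPowerSeries.X n)
    = MvPowerSeries.coeff d (if n = k then 1 else 0)
  rw [MvPowerSeries.coeff_X]
  by_cases h : n = k
  · subst h
    rw [if_pos rfl]
    by_cases hd : d = 0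
    · subst hd
      simp [MvPowerSeries.coeff_one]
    · have h1 : ¬ ((0 : ℕ →₀ ℕ) + Finsupp.single n 1 = Finsupp.single n 1) → True := fun _ => trivial
      have h2 : d + Finsupp.single n 1 ≠ Finsupp.single n 1 := by
        intro hEq
        exact hd (by simpa using add_right_cancel (hEq.trans (zero_add (Finsupp.single n 1)).symm))
      rw [if_neg h2, mul_zero, MvPowerSeries.coeff_one, if_neg hd]
  · rw [if_neg h]
    have h2 : d + Finsupp.single k 1 ≠ Finsupp.single n 1 := by
      intro hEq
      have := congrArg (fun x => x k) hEq
      simp [Finsupp.add_apply, Finsupp.single_eq_same,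
        Finsupp.single_eq_of_ne (Ne.symm h)] at this
    rw [if_neg h2, mul_zero]
    simp

lemma pderiv_pow (k : ℕ) (f : MvPowerSeries ℕ ℝ) :
    ∀ n : ℕ, pderivMv k (f ^ (n + 1)) = ((n : ℝ) + 1) • (f ^ n * pderivMv k f) := by
  intro n
  induction n with
  | zero => simp [pderiv_mul]
  | succ n ih =>
    rw [pow_succ, pderiv_mul, ih, smul_mul_assoc]
    have h1 : f ^ n * pderivMv k f * f = f ^ (n + 1) * pderivMv k f := by ring
    rw [h1]
    have h2 : (((n + 1 : ℕ) : ℝ) + 1) = ((n : ℝ) + 1) + 1 := by push_cast; ring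
    rw [h2]
    simp [add_smul, one_smul, add_assoc]
end D
section E
open PderivAux

lemma mv_summable_iff {F : ℕ → MvPowerSeries ℕ ℝ} :
    Summable F ↔ ∀ d : ℕ →₀ ℕ, Summable fun n => MvPowerSeries.coeff d (F n) :=
  Pi.summable

lemma mv_tsum_apply {F : ℕ → MvPowerSeries ℕ ℝ} (hF : Summable F) (d : ℕ →₀ ℕ) :
    MvPowerSeries.coeff d (∑' n, F n) = ∑' n, MvPowerSeries.coeff d (F n) :=
  tsum_apply hF

lemma summable_of_deg (F : ℕ → MvPowerSeries ℕ ℝ)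
    (h : ∀ (d : ℕ →₀ ℕ) (n : ℕ), deg d < n → MvPowerSeries.coeff d (F n) = 0) :
    Summable F := by
  rw [mv_summable_iff]
  intro d
  apply summable_of_ne_finset_zero (s := Finset.range (deg d + 1))
  intro n hn
  exact h d n (by simpa using hn)

lemma pderiv_tsum (k : ℕ) (F : ℕ → MvPowerSeries ℕ ℝ) (hF : Summable F) :
    pderivMv k (∑' n, F n) = ∑' n, pderivMv k (F n) := by
  have hF' : Summable fun n => pderivMv k (F n) := by
    rw [mv_summable_iff]
    intro d
    have := (mv_summable_iff.mp hF (d + Finsupp.single k 1)).mul_left ((d k : ℝ) + 1)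
    exact this.congr fun n => (coeff_pderiv k (F n) d).symm
  funext d
  show ((d k : ℝ) + 1) * MvPowerSeries.coeff (d + Finsupp.single k 1) (∑' n, F n)
      = MvPowerSeries.coeff d (∑' n, pderivMv k (F n))
  rw [mv_tsum_apply hF, mv_tsum_apply hF', ← tsum_mul_left]
  exact tsum_congr fun n => (coeff_pderiv k (F n) d).symm

lemma tsum_mul_right' (F : ℕ → MvPowerSeries ℕ ℝ) (hF : Summable F)
    (D : MvPowerSeries ℕ ℝ) :
    (∑' n, F n) * D = ∑' n, F n * D := by
  classical
  have hFD : Summable fun n => F n * D := by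
    rw [mv_summable_iff]
    intro d
    have : ∀ n, MvPowerSeries.coeff d (F n * D)
        = ∑ p ∈ Finset.HasAntidiagonal.antidiagonal d,
            MvPowerSeries.coeff p.1 (F n) * MvPowerSeries.coeff p.2 D := fun n =>
      MvPowerSeries.coeff_mul d (F n) D
    refine Summable.congr ?_ fun n => (this n).symm
    apply summable_sum
    intro p _
    exact (mv_summable_iff.mp hF p.1).mul_right _
  funext d
  show MvPowerSeries.coeff d ((∑' n, F n) * D) = MvPowerSeries.coeff d (∑' n, F n * D)
  rw [MvPowerSeries.coeff_mul, mv_tsum_apply hFD]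
  calc ∑ p ∈ Finset.HasAntidiagonal.antidiagonal d,
        MvPowerSeries.coeff p.1 (∑' n, F n) * MvPowerSeries.coeff p.2 D
      = ∑ p ∈ Finset.HasAntidiagonal.antidiagonal d,
          ∑' n, MvPowerSeries.coeff p.1 (F n) * MvPowerSeries.coeff p.2 D := by
        refine Finset.sum_congr rfl fun p _ => ?_
        rw [mv_tsum_apply hF, tsum_mul_right]
    _ = ∑' n, ∑ p ∈ Finset.HasAntidiagonal.antidiagonal d,
          MvPowerSeries.coeff p.1 (F n) * MvPowerSeries.coeff p.2 D := by
        refine (Summable.tsum_finsetSum ?_).symm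
        intro p _
        exact (mv_summable_iff.mp hF p.1).mul_right _
    _ = ∑' n, MvPowerSeries.coeff d (F n * D) := by
        exact tsum_congr fun n => (MvPowerSeries.coeff_mul d (F n) D).symm
end E
section F
open PderivAux

/-- `∂I₀/∂t_k = (1/(1−I₁)) · I₀^k/k!`. -/
theorem pderiv_I0 (I0 : MvPowerSeries ℕ ℝ)
    (hc : MvPowerSeries.constantCoeff I0 = 0)
    (hfix : I0 = ∑' n : ℕ, ((n.factorial : ℝ))⁻¹ • (MvPowerSeries.X n * I0 ^ n))
    (I : ℕ → MvPowerSeries ℕ ℝ)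
    (hI : ∀ k, I k = ∑' n : ℕ, ((n.factorial : ℝ))⁻¹ •
        (MvPowerSeries.X (n + k) * I0 ^ n)) :
    ∀ k : ℕ, pderivMv k I0 = (1 - I 1)⁻¹ * (((k.factorial : ℝ))⁻¹ • I0 ^ k) := by
  classical
  intro k
  set D : MvPowerSeries ℕ ℝ := pderivMv k I0 with hDdef
  set F : ℕ → MvPowerSeries ℕ ℝ :=
    fun n => ((n.factorial : ℝ))⁻¹ • (MvPowerSeries.X n * I0 ^ n) with hFdef
  set G : ℕ → MvPowerSeries ℕ ℝ :=
    fun n => ((n.factorial : ℝ))⁻¹ • (MvPowerSeries.X (n + 1) * I0 ^ n) with hGdef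
  set A : ℕ → MvPowerSeries ℕ ℝ :=
    fun n => if n = k then ((k.factorial : ℝ))⁻¹ • I0 ^ k else 0 with hAdef
  set B : ℕ → MvPowerSeries ℕ ℝ :=
    fun n => ((n.factorial : ℝ))⁻¹ • (MvPowerSeries.X n * pderivMv k (I0 ^ n)) with hBdef
  -- Summability of the defining family
  have hFsum : Summable F := by
    apply summable_of_deg
    intro d n hd
    rw [hFdef]
    simp only [MvPowerSeries.coeff_smul]
    rw [coeff_X_mul' n (I0 ^ n) d]
    split_ifs with h
    · rw [coeff_pow_eq_zero hc n _ (lt_of_le_of_lt (deg_mono tsub_le_self) hd), mul_zero]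
    · rw [mul_zero]
  have hGsum : Summable G := by
    apply summable_of_deg
    intro d n hd
    rw [hGdef]
    simp only [MvPowerSeries.coeff_smul]
    rw [coeff_X_mul' (n + 1) (I0 ^ n) d]
    split_ifs with h
    · rw [coeff_pow_eq_zero hc n _ (lt_of_le_of_lt (deg_mono tsub_le_self) hd), mul_zero]
    · rw [mul_zero]
  have hAsum : Summable A := by
    apply summable_of_deg
    intro d n hd
    rw [hAdef]
    dsimp only
    split_ifs with h
    · subst h
      rw [MvPowerSeries.coeff_smul, coeff_pow_eq_zero hc n _ hd, mul_zero]
    · exact map_zero _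
  have hBsum : Summable B := by
    apply summable_of_deg
    intro d n hd
    rw [hBdef]
    match n, hd with
    | (m + 1), hd =>
      simp only [MvPowerSeries.coeff_smul]
      rw [pderiv_pow k I0 m, coeff_X_mul' (m + 1) _ d]
      split_ifs with h
      · have h1 : deg (d - Finsupp.single (m + 1) 1) + 1 = deg d := by
          have h3 := deg_add (d - Finsupp.single (m + 1) 1) (Finsupp.single (m + 1) 1)
          rw [tsub_add_cancel_of_le h, deg_single] at h3
          omega
        have h2 : deg (d - Finsupp.single (m + 1) 1) < m := by omega
        rw [MvPowerSeries.coeff_smul, coeff_pow_mul_eq_zero hc (pderivMv k I0) h2,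
          mul_zero, mul_zero]
      · rw [mul_zero]
  -- the derivative of the fixed-point equation
  have hD : D = ∑' n, pderivMv k (F n) := by
    rw [hDdef]
    conv_lhs => rw [hfix]
    exact pderiv_tsum k F hFsum
  have hsplit : ∀ n, pderivMv k (F n) = A n + B n := by
    intro n
    rw [hFdef, hBdef, hAdef]
    dsimp only
    rw [pderiv_smul, pderiv_mul, pderiv_X, smul_add]
    congr 1
    split_ifs with h
    · subst h
      rw [one_mul]
    · rw [zero_mul, smul_zero]
  have hD2 : D = (∑' n, A n) + ∑' n, B n := by
    rw [hD, tsum_congr hsplit, Summable.tsum_add hAsum hBsum]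
  -- the A-part sums to I0^k/k!
  have hSA : (∑' n, A n) = ((k.factorial : ℝ))⁻¹ • I0 ^ k := by
    rw [hAdef]
    exact tsum_ite_eq k (fun _ => ((k.factorial : ℝ))⁻¹ • I0 ^ k)
  -- the B-part sums to I₁ * D
  have hB0 : B 0 = 0 := by
    rw [hBdef]
    simp [pow_zero, _root_.pderiv_one]
  have hBn : ∀ n : ℕ, B (n + 1) = G n * D := by
    intro n
    rw [hBdef, hGdef]
    dsimp only
    rw [pderiv_pow k I0 n, mul_smul_comm, smul_smul]
    have hne : ((n : ℝ) + 1) ≠ 0 := by positivity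
    have hsc : (((n + 1).factorial : ℝ))⁻¹ * ((n : ℝ) + 1) = ((n.factorial : ℝ))⁻¹ := by
      rw [Nat.factorial_succ]
      have hf : ((n.factorial : ℝ)) ≠ 0 := Nat.cast_ne_zero.mpr (Nat.factorial_ne_zero n)
      push_cast
      field_simp
    rw [hsc, smul_mul_assoc, mul_assoc]
  have hSB : (∑' n, B n) = I 1 * D := by
    rw [Summable.tsum_eq_zero_add hBsum, hB0, zero_add, tsum_congr hBn,
      ← tsum_mul_right' G hGsum D, hI 1]
  -- the constant coefficient of I 1 vanishes
  have hconst : MvPowerSeries.constantCoeff (I 1) = 0 := by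
    rw [← MvPowerSeries.coeff_zero_eq_constantCoeff_apply, hI 1]
    rw [show (∑' n : ℕ, ((n.factorial : ℝ))⁻¹ • (MvPowerSeries.X (n + 1) * I0 ^ n))
        = ∑' n, G n from rfl]
    rw [mv_tsum_apply hGsum]
    have : ∀ n : ℕ, MvPowerSeries.coeff 0 (G n) = 0 := by
      intro n
      rw [hGdef]
      dsimp only
      rw [MvPowerSeries.coeff_smul, coeff_X_mul' (n + 1) _ 0]
      rw [if_neg (by simp [Finsupp.single_le_iff]), mul_zero]
    rw [tsum_congr this, tsum_zero]
  have hunit : MvPowerSeries.constantCoeff (1 - I 1) ≠ 0 := by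
    rw [map_sub, map_one, hconst, sub_zero]
    exact one_ne_zero
  have hmain : (1 - I 1) * D = ((k.factorial : ℝ))⁻¹ • I0 ^ k := by
    have h := hD2
    rw [hSA, hSB] at h
    linear_combination h
  calc D = 1 * D := (one_mul D).symm
    _ = ((1 - I 1)⁻¹ * (1 - I 1)) * D := by
        rw [MvPowerSeries.inv_mul_cancel _ hunit]
    _ = (1 - I 1)⁻¹ * ((1 - I 1) * D) := mul_assoc _ _ _
    _ = (1 - I 1)⁻¹ * (((k.factorial : ℝ))⁻¹ • I0 ^ k) := by rw [hmain]
end F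
end

section
/- The formal power series I_0 satisfies ∂I_0/∂t_0 = 1 + ∑_{k≥1} ∑_{p_1+⋯+p_k = k} (t_{p_1}/p_1!)⋯(t_{p_k}/p_k!). -/
open MvPowerSeries

/- ### Auxiliary material -/

section Aux

open Finset

/-- The total degree additive homomorphism on exponents. -/
noncomputable def degAux : (ℕ →₀ ℕ) →+ ℕ where
  toFun d := d.sum fun _ n => n
  map_zero' := Finsupp.sum_zero_index
  map_add' a b := by
    show (a + b).sum (fun _ n => n) = a.sum (fun _ n => n) + b.sum (fun _ n => n)
    exact Finsupp.sum_add_index' (fun _ => rfl) (fun _ _ _ => rfl)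

lemma degAux_single (a : ℕ) : degAux (Finsupp.single a 1) = 1 := by
  show (Finsupp.single a 1).sum (fun _ n => n) = 1
  rw [Finsupp.sum_single_index rfl]

lemma degAux_E (n : ℕ) (p : Fin n → ℕ) : degAux (∑ i, Finsupp.single (p i) 1) = n := by
  rw [map_sum]; simp [degAux_single]

lemma prodX_eq_monomial (n : ℕ) (p : Fin n → ℕ) :
    (∏ i, MvPowerSeries.X (p i) : MvPowerSeries ℕ ℝ)
      = MvPowerSeries.monomial (∑ i, Finsupp.single (p i) 1) 1 := by
  induction n with
  | zero => simp
  | succ n ih =>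
    rw [Fin.prod_univ_succ, Fin.sum_univ_succ, ih, MvPowerSeries.X,
      MvPowerSeries.monomial_mul_monomial, one_mul]

lemma pderivMv_monomial (e : ℕ →₀ ℕ) (a : ℝ) :
    pderivMv 0 (MvPowerSeries.monomial e a)
      = (e 0 : ℝ) • MvPowerSeries.monomial (e - Finsupp.single 0 1) a := by
  funext d
  rw [show ((e 0 : ℝ) • MvPowerSeries.monomial (e - Finsupp.single 0 1) a) d
      = (e 0 : ℝ) * MvPowerSeries.coeff d
          (MvPowerSeries.monomial (e - Finsupp.single 0 1) a) from rfl,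
    show pderivMv 0 (MvPowerSeries.monomial e a) d
      = ((d 0 : ℝ) + 1) * MvPowerSeries.coeff (d + Finsupp.single 0 1)
          (MvPowerSeries.monomial e a) from rfl,
    MvPowerSeries.coeff_monomial, MvPowerSeries.coeff_monomial]
  by_cases h : d + Finsupp.single 0 1 = e
  · have h0 : e 0 = d 0 + 1 := by rw [← h]; simp
    have hd : d = e - Finsupp.single 0 1 := eq_tsub_of_add_eq h
    rw [if_pos h, if_pos hd, h0]
    push_cast; ring
  · rw [if_neg h]
    by_cases hd : d = e - Finsupp.single 0 1
    · have he0 : e 0 = 0 := by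
        by_contra he0
        have hle : Finsupp.single 0 1 ≤ e :=
          Finsupp.single_le_iff.mpr (Nat.one_le_iff_ne_zero.mpr he0)
        exact h (by rw [hd, tsub_add_cancel_of_le hle])
      rw [if_pos hd, he0]; simp
    · rw [if_neg hd]; ring

lemma pderivMv_smul (c : ℝ) (f : MvPowerSeries ℕ ℝ) :
    pderivMv 0 (c • f) = c • pderivMv 0 f := by
  funext d
  show ((d 0 : ℝ) + 1) * (c * f (d + Finsupp.single 0 1))
    = c * (((d 0 : ℝ) + 1) * f (d + Finsupp.single 0 1))
  ring

lemma pderivMv_sum {α : Type*} (s : Finset α) (f : α → MvPowerSeries ℕ ℝ) :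
    pderivMv 0 (∑ x ∈ s, f x) = ∑ x ∈ s, pderivMv 0 (f x) := by
  funext d
  rw [show pderivMv 0 (∑ x ∈ s, f x) d
      = ((d 0 : ℝ) + 1) * (∑ x ∈ s, f x) (d + Finsupp.single 0 1) from rfl]
  erw [Finset.sum_apply, Finset.sum_apply]
  rw [Finset.mul_sum]
  rfl

lemma E_apply_zero (n : ℕ) (p : Fin n → ℕ) :
    (∑ i, Finsupp.single (p i) 1) 0 = (Finset.univ.filter (fun i => p i = 0)).card := by
  rw [Finset.sum_apply', Finset.card_filter]
  congr 1
  funext k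
  simp [Finsupp.single_apply, eq_comm]

/-- The key combinatorial identity (insertion of a zero part). -/
lemma key_identity (m : ℕ) :
    ∑ p ∈ Finset.Nat.antidiagonalTuple (m + 2) (m + 1),
      (∏ i, ((p i).factorial : ℝ)⁻¹) •
        ((((∑ i, Finsupp.single (p i) 1) 0 : ℕ) : ℝ) •
          MvPowerSeries.monomial ((∑ i, Finsupp.single (p i) 1) - Finsupp.single 0 1) (1:ℝ))
    = ((m : ℝ) + 2) • ∑ q ∈ Finset.Nat.antidiagonalTuple (m + 1) (m + 1),
        (∏ i, ((q i).factorial : ℝ)⁻¹) •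
          MvPowerSeries.monomial (∑ i, Finsupp.single (q i) 1) (1:ℝ) := by
  have hL : ∀ p : Fin (m+2) → ℕ,
      (∏ i, ((p i).factorial : ℝ)⁻¹) •
        ((((∑ i, Finsupp.single (p i) 1) 0 : ℕ) : ℝ) •
          MvPowerSeries.monomial ((∑ i, Finsupp.single (p i) 1) - Finsupp.single 0 1) (1:ℝ))
      = ∑ i ∈ Finset.univ.filter (fun i => p i = 0),
          (∏ i, ((p i).factorial : ℝ)⁻¹) •
            MvPowerSeries.monomial
              ((∑ i, Finsupp.single (p i) 1) - Finsupp.single 0 1) (1:ℝ) := by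
    intro p
    rw [E_apply_zero, Finset.sum_const, Nat.cast_smul_eq_nsmul, smul_comm]
  have hR : ((m : ℝ) + 2) • ∑ q ∈ Finset.Nat.antidiagonalTuple (m + 1) (m + 1),
        (∏ i, ((q i).factorial : ℝ)⁻¹) •
          MvPowerSeries.monomial (∑ i, Finsupp.single (q i) 1) (1:ℝ)
      = ∑ j : Fin (m + 2), ∑ q ∈ Finset.Nat.antidiagonalTuple (m + 1) (m + 1),
        (∏ i, ((q i).factorial : ℝ)⁻¹) •
          MvPowerSeries.monomial (∑ i, Finsupp.single (q i) 1) (1:ℝ) := by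
    rw [Finset.sum_const, card_univ, Fintype.card_fin, ← Nat.cast_smul_eq_nsmul ℝ]
    push_cast; ring_nf
  simp_rw [hL]
  rw [hR, Finset.sum_sigma', Finset.sum_sigma']
  refine Finset.sum_nbij' (fun x => ⟨x.2, x.1 ∘ x.2.succAbove⟩)
    (fun y => ⟨y.1.insertNth 0 y.2, y.1⟩) ?_ ?_ ?_ ?_ ?_
  · rintro ⟨p, i⟩ h
    simp only [Finset.mem_sigma, Finset.mem_filter, Finset.mem_univ, true_and,
      Finset.Nat.mem_antidiagonalTuple] at h ⊢
    obtain ⟨hp, hi⟩ := h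
    rw [Fin.sum_univ_succAbove p i, hi, zero_add] at hp
    exact hp
  · rintro ⟨j, q⟩ h
    simp only [Finset.mem_sigma, Finset.mem_univ, true_and,
      Finset.Nat.mem_antidiagonalTuple, Finset.mem_filter] at h ⊢
    constructor
    · rw [Fin.sum_univ_succAbove _ j]
      simp [h]
    · simp
  · rintro ⟨p, i⟩ h
    simp only [Finset.mem_sigma, Finset.mem_filter, Finset.mem_univ, true_and] at h
    have : (i.insertNth 0 (p ∘ i.succAbove)) = p := by
      rw [← h.2]
      exact Fin.insertNth_self_removeNth i p
    simp [this]
  · rintro ⟨j, q⟩ h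
    simp [Fin.insertNth_comp_succAbove]
  · rintro ⟨p, i⟩ h
    simp only [Finset.mem_sigma, Finset.mem_filter, Finset.mem_univ, true_and] at h
    have hc : (∏ k, ((p k).factorial : ℝ)⁻¹)
        = ∏ k, (((p ∘ i.succAbove) k).factorial : ℝ)⁻¹ := by
      rw [Fin.prod_univ_succAbove (fun k => (((p k).factorial : ℝ)⁻¹)) i, h.2]
      simp
    have hE : (∑ k, Finsupp.single (p k) 1) - Finsupp.single 0 1
        = ∑ k, Finsupp.single ((p ∘ i.succAbove) k) 1 := by
      rw [Fin.sum_univ_succAbove (fun k => Finsupp.single (p k) 1) i, h.2,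
        add_tsub_cancel_left]
      rfl
    rw [hc, hE]

/-- The inner sum of `I0series` at index `k`. -/
noncomputable def Tk (n m : ℕ) : MvPowerSeries ℕ ℝ :=
  ∑ p ∈ Finset.Nat.antidiagonalTuple n m,
    (∏ i, ((p i).factorial : ℝ)⁻¹) • ∏ i, MvPowerSeries.X (p i)

lemma Tk_apply_eq_zero (n m : ℕ) (d : ℕ →₀ ℕ) (h : degAux d ≠ n) : Tk n m d = 0 := by
  rw [Tk]; erw [Finset.sum_apply]
  refine Finset.sum_eq_zero fun p hp => ?_
  rw [show ((∏ i, ((p i).factorial : ℝ)⁻¹) • ∏ i, MvPowerSeries.X (p i)) d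
      = (∏ i, ((p i).factorial : ℝ)⁻¹) *
          MvPowerSeries.coeff d (∏ i, MvPowerSeries.X (p i)) from rfl,
    prodX_eq_monomial, MvPowerSeries.coeff_monomial, if_neg, mul_zero]
  intro hd
  exact h (by rw [hd, degAux_E])

lemma summable_aux (g : ℕ → MvPowerSeries ℕ ℝ)
    (hg : ∀ d : ℕ →₀ ℕ, ∃ K, ∀ k, K ≠ k → g k d = 0) :
    Summable g := by
  refine Pi.summable.mpr ?_
  intro d
  obtain ⟨K, hK⟩ := hg d
  exact summable_of_ne_finset_zero (s := {K}) fun k hk =>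
    hK k (by simpa using (Ne.symm (by simpa using hk)))

end Aux

/-- `∂I₀/∂t₀ = 1 + ∑_{k≥1} ∑_{p₁+⋯+p_k = k} (t_{p₁}/p₁!)⋯(t_{p_k}/p_k!)`. -/
theorem pderiv_t0_I0 :
    pderivMv 0 I0series
      = 1 + ∑' k : ℕ,
          ∑ p ∈ Finset.Nat.antidiagonalTuple (k + 1) (k + 1),
            (∏ i, ((p i).factorial : ℝ)⁻¹) • ∏ i, MvPowerSeries.X (p i) := by
  classical
  set ak : ℕ → MvPowerSeries ℕ ℝ := fun k => ((k : ℝ) + 1)⁻¹ • Tk (k + 1) k with hak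
  have hI0 : I0series = ∑' k, ak k := rfl
  -- summability of the family and of its derivative family
  have h1 : Summable ak := by
    apply summable_aux
    intro d
    refine ⟨degAux d - 1, fun k hk => ?_⟩
    have hne : degAux d ≠ k + 1 := by omega
    show ((k : ℝ) + 1)⁻¹ * Tk (k + 1) k d = 0
    rw [Tk_apply_eq_zero _ _ _ hne, mul_zero]
  have h2 : Summable (fun k => pderivMv 0 (ak k)) := by
    apply summable_aux
    intro d
    refine ⟨degAux (d + Finsupp.single 0 1) - 1, fun k hk => ?_⟩
    have hne : degAux (d + Finsupp.single 0 1) ≠ k + 1 := by omega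
    show ((d 0 : ℝ) + 1) * (((k : ℝ) + 1)⁻¹ * Tk (k + 1) k (d + Finsupp.single 0 1)) = 0
    rw [Tk_apply_eq_zero _ _ _ hne, mul_zero, mul_zero]
  -- derivative commutes with the sum
  have h3 : pderivMv 0 I0series = ∑' k, pderivMv 0 (ak k) := by
    funext d
    rw [show pderivMv 0 I0series d
        = ((d 0 : ℝ) + 1) * I0series (d + Finsupp.single 0 1) from rfl, hI0]
    erw [tsum_apply h1, tsum_apply h2]
    rw [← tsum_mul_left]
    rfl
  -- the zeroth term
  have h5 : pderivMv 0 (ak 0) = 1 := by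
    have hT : Tk 1 0 = MvPowerSeries.monomial (Finsupp.single 0 1) 1 := by
      rw [Tk, Finset.Nat.antidiagonalTuple_zero_right, Finset.sum_singleton,
        prodX_eq_monomial]
      simp
    rw [hak]
    simp only [Nat.cast_zero, zero_add, inv_one, one_smul, hT, pderivMv_monomial]
    simp
  -- the successor terms
  have h4 : ∀ k, pderivMv 0 (ak (k + 1)) = Tk (k + 1) (k + 1) := by
    intro k
    rw [hak]
    simp only []
    rw [pderivMv_smul, Tk, pderivMv_sum]
    have hterm : ∀ p : Fin (k + 2) → ℕ,
        pderivMv 0 ((∏ i, ((p i).factorial : ℝ)⁻¹) • ∏ i, MvPowerSeries.X (p i))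
          = (∏ i, ((p i).factorial : ℝ)⁻¹) •
              ((((∑ i, Finsupp.single (p i) 1) 0 : ℕ) : ℝ) •
                MvPowerSeries.monomial
                  ((∑ i, Finsupp.single (p i) 1) - Finsupp.single 0 1) (1:ℝ)) := by
      intro p
      rw [pderivMv_smul, prodX_eq_monomial, pderivMv_monomial]
    simp_rw [hterm]
    rw [key_identity k, smul_smul]
    have hc : ((((k : ℕ) + 1 : ℕ) : ℝ) + 1)⁻¹ * ((k : ℝ) + 2) = 1 := by
      push_cast
      rw [show (k : ℝ) + 1 + 1 = (k : ℝ) + 2 by ring]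
      exact inv_mul_cancel₀ (by positivity)
    rw [hc, one_smul, Tk]
    exact Finset.sum_congr rfl fun q hq => by rw [prodX_eq_monomial]
  -- assemble
  have hU : Summable (fun k => Tk (k + 1) (k + 1)) := by
    apply summable_aux
    intro d
    refine ⟨degAux d - 1, fun k hk => ?_⟩
    exact Tk_apply_eq_zero _ _ _ (by omega)
  rw [h3]
  funext d
  have h2d : Summable (fun k => pderivMv 0 (ak k) d) := Pi.summable.mp h2 d
  show (∑' (k : ℕ), pderivMv 0 (ak k)) d
      = (1 : MvPowerSeries ℕ ℝ) d + (∑' k : ℕ, Tk (k + 1) (k + 1)) d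
  erw [tsum_apply h2, tsum_apply hU]; rw [h2d.tsum_eq_zero_add]
  congr 1
  · exact congrFun h5 d
  · exact tsum_congr fun k => congrFun (h4 k) d
end

section
/- The formal power series identity ∑_{n≥0} (2n−1)!! x^n = 1/(1 − x/(1 − 2x/(1 − 3x/(1 − ⋯)))) holds, i.e. the generating function of double factorials of odd numbers equals the given continued fraction: if C_N(x) denotes the N-th convergent defined by C with c_k = kx, then the coefficients of C_N agree with (2n−1)!! for n ≤ N. -/
open PowerSeries
open Finset

noncomputable def rr (e n : ℕ) : ℝ := ∏ i ∈ Finset.range n, ((2*e + 2*i + 1 : ℕ) : ℝ)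

lemma rr_succ_left (e n : ℕ) : rr e (n+1) = ((2*e+1 : ℕ) : ℝ) * rr (e+1) n := by
  unfold rr
  rw [Finset.prod_range_succ']
  rw [mul_comm]
  congr 1
  refine Finset.prod_congr rfl fun i _ => ?_
  congr 1
  omega

lemma rr_succ_right (e n : ℕ) : rr e (n+1) = rr e n * ((2*e+2*n+1 : ℕ) : ℝ) := by
  unfold rr; rw [Finset.prod_range_succ]

noncomputable def aa : ℕ → ℕ → ℝ
  | 0, _ => 0
  | 1, n => if n = 0 then 1 else 0
  | (m+2), n =>
    if m % 2 = 0 then rr (m/2) n * ((n + m/2).choose (m/2))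
    else rr (m/2 + 1) n * ((n + m/2).choose (m/2))

lemma aa_even (e n : ℕ) : aa (2*e+2) n = rr e n * ((n + e).choose e) := by
  show (if (2*e) % 2 = 0 then _ else _) = _
  simp [Nat.mul_mod_right, Nat.mul_div_cancel_left _ (two_pos)]

lemma aa_odd (e n : ℕ) : aa (2*e+3) n = rr (e+1) n * ((n + e).choose e) := by
  show (if (2*e+1) % 2 = 0 then _ else _) = _
  have h1 : (2*e+1) % 2 = 1 := by omega
  have h2 : (2*e+1) / 2 = e := by omega
  simp [h1, h2]

lemma aa_zero (m : ℕ) (hm : 1 ≤ m) : aa m 0 = 1 := by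
  match m with
  | 1 => simp [aa]
  | (m+2) =>
    show (if m % 2 = 0 then _ else _) = _
    split <;> simp [rr]

lemma aa_rec (m n : ℕ) (hm : 1 ≤ m) :
    aa m (n+1) = aa (m+1) (n+1) - m * aa (m+2) n := by
  match m, hm with
  | 1, _ =>
    have h2 : aa 2 (n+1) = rr 0 (n+1) * (((n+1) + 0).choose 0) := aa_even 0 (n+1)
    have h3 : aa 3 n = rr 1 n * ((n + 0).choose 0) := aa_odd 0 n
    have : aa 1 (n+1) = 0 := by simp [aa]
    rw [this, h2, h3, rr_succ_left]
    norm_num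
  | (m+2), _ =>
    rcases Nat.even_or_odd m with ⟨e, he⟩ | ⟨e, he⟩
    · subst he
      -- m+2 = 2e+2, even case
      have lhs : aa (e+e+2) (n+1) = rr e (n+1) * (((n+1) + e).choose e) := by
        have := aa_even e (n+1); rw [show 2*e+2 = e+e+2 by ring] at this; exact this
      have r1 : aa (e+e+2+1) (n+1) = rr (e+1) (n+1) * (((n+1) + e).choose e) := by
        have := aa_odd e (n+1); rw [show 2*e+3 = e+e+2+1 by ring] at this; exact this
      have r2 : aa (e+e+2+2) n = rr (e+1) n * ((n + (e+1)).choose (e+1)) := by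
        have := aa_even (e+1) n; rw [show 2*(e+1)+2 = e+e+2+2 by ring] at this; exact this
      rw [lhs, r1, r2, rr_succ_left, rr_succ_right]
      have key : ((n+e+1).choose (e+1) * (e+1) : ℕ) = ((n+e+1).choose e) * (n+1) := by
        rw [Nat.choose_succ_right_eq]; congr 1; omega
      have key' : (((n+e+1).choose (e+1) : ℝ)) * (e+1) = ((n+e+1).choose e : ℝ) * (n+1) := by
        exact_mod_cast congrArg (Nat.cast : ℕ → ℝ) key
      rw [show n+1+e = n+e+1 by omega, show n+(e+1) = n+e+1 by omega]
      push_cast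
      linear_combination (2 * rr (e+1) n) * key'
    · subst he
      -- m+2 = 2e+3, odd case
      have lhs : aa (2*e+1+2) (n+1) = rr (e+1) (n+1) * (((n+1) + e).choose e) := aa_odd e (n+1)
      have h1 : aa (2*e+1+2+1) (n+1) = rr (e+1) (n+1) * (((n+1) + (e+1)).choose (e+1)) := by
        have := aa_even (e+1) (n+1); rw [show 2*(e+1)+2 = 2*e+1+2+1 by ring] at this; exact this
      have h2 : aa (2*e+1+2+2) n = rr (e+2) n * ((n + (e+1)).choose (e+1)) := by
        have := aa_odd (e+1) n; rw [show 2*(e+1)+3 = 2*e+1+2+2 by ring] at this; exact this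
      rw [lhs, h1, h2, rr_succ_left, show e+1+1 = e+2 by omega]
      have pascal : ((n+e+2).choose (e+1) : ℕ) = (n+e+1).choose e + (n+e+1).choose (e+1) := by
        exact Nat.choose_succ_succ (n+e+1) e
      have pascal' : ((n+e+2).choose (e+1) : ℝ) = ((n+e+1).choose e : ℝ) + ((n+e+1).choose (e+1) : ℝ) := by
        exact_mod_cast congrArg (Nat.cast : ℕ → ℝ) pascal
      rw [show n+1+e = n+e+1 by omega, show n+1+(e+1) = n+e+2 by omega,
          show n+(e+1) = n+e+1 by omega, show 2*(e+1)+1 = 2*e+3 by ring]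
      push_cast
      linear_combination (-((2:ℝ)*e+3) * rr (e+2) n) * pascal'

noncomputable def bb : ℕ → ℕ → ℝ
  | 0, _ => 1
  | (n+1), m => m * ∑ i ∈ (Finset.range (n+1)).attach, bb i.1 (m+1) * bb (n - i.1) m
  termination_by n _ => n
  decreasing_by
  · have := i.2; simp only [Finset.mem_range] at this; omega
  · omega

lemma bb_zero (m : ℕ) : bb 0 m = 1 := by simp [bb]

lemma bb_succ (n m : ℕ) :
    bb (n+1) m = m * ∑ i ∈ Finset.range (n+1), bb i (m+1) * bb (n - i) m := by
  rw [bb]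
  congr 1
  exact Finset.sum_attach (Finset.range (n+1)) (fun i => bb i (m+1) * bb (n - i) m)

noncomputable def Aser (m : ℕ) : PowerSeries ℝ := PowerSeries.mk (aa m)
noncomputable def Tser (m : ℕ) : PowerSeries ℝ := PowerSeries.mk (fun n => bb n m)

lemma T_eq (m : ℕ) :
    Tser m = 1 + (m:ℝ) • (PowerSeries.X * (Tser (m+1) * Tser m)) := by
  ext n
  rcases n with _ | n
  · simp [Tser, bb_zero]
  · rw [map_add, PowerSeries.coeff_smul, PowerSeries.coeff_succ_X_mul]
    rw [PowerSeries.coeff_mul, Finset.Nat.sum_antidiagonal_eq_sum_range_succ_mk]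
    simp only [Tser, PowerSeries.coeff_mk, PowerSeries.coeff_one, Nat.succ_ne_zero, if_false]
    rw [bb_succ]
    simp [smul_eq_mul]

lemma AT : ∀ n m : ℕ, 1 ≤ m →
    PowerSeries.coeff n (Aser m * Tser m) = aa (m+1) n := by
  intro n
  induction n using Nat.strong_induction_on with
  | _ n ih =>
    intro m hm
    rcases n with _ | n
    · rw [PowerSeries.coeff_mul]
      simp [Aser, Tser, aa_zero m hm, aa_zero (m+1) (by omega), bb_zero]
    · have expand : Aser m * Tser m
          = Aser m + (m:ℝ) • (PowerSeries.X * (Tser (m+1) * (Aser m * Tser m))) := by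
        conv_lhs => rw [T_eq m]
        rw [mul_add, mul_one, mul_smul_comm]
        congr 1
        ring
      rw [expand, map_add, PowerSeries.coeff_smul, PowerSeries.coeff_succ_X_mul,
        PowerSeries.coeff_mul, Finset.Nat.sum_antidiagonal_eq_sum_range_succ_mk]
      have hsum : ∀ k ∈ Finset.range (n+1),
          PowerSeries.coeff k (Tser (m+1)) * PowerSeries.coeff (n-k) (Aser m * Tser m)
            = bb k (m+1) * aa (m+1) (n-k) := by
        intro k hk
        simp only [Finset.mem_range] at hk
        rw [ih (n-k) (by omega) m hm]
        simp [Tser]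
      rw [Finset.sum_congr rfl hsum]
      have h2 : ∑ k ∈ Finset.range (n+1), bb k (m+1) * aa (m+1) (n-k) = aa (m+2) n := by
        have h3 := ih n (by omega) (m+1) (by omega)
        rw [mul_comm, PowerSeries.coeff_mul,
          Finset.Nat.sum_antidiagonal_eq_sum_range_succ_mk] at h3
        simpa [Aser, Tser] using h3
      rw [h2]
      simp only [Aser, PowerSeries.coeff_mk, smul_eq_mul]
      rw [aa_rec m n hm]
      ring

lemma rr0_df : ∀ n : ℕ, rr 0 n = (Nat.doubleFactorial (2*n-1) : ℝ) := by
  intro n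
  induction n with
  | zero => simp [rr]
  | succ k ihk =>
    rw [rr_succ_right, ihk]
    rcases k with _ | j
    · norm_num [rr, Nat.doubleFactorial]
    · rw [show 2*(j+1)-1 = 2*j+1 from by omega, show 2*(j+1+1)-1 = 2*j+1+2 from by omega,
        Nat.doubleFactorial_add_two]
      push_cast
      ring

lemma bb_one (n : ℕ) : bb n 1 = (Nat.doubleFactorial (2*n-1) : ℝ) := by
  have hA : Aser 1 = 1 := by
    ext k
    simp [Aser, aa, PowerSeries.coeff_one]
  have h := AT n 1 le_rfl
  rw [hA, one_mul] at h
  have h2 : aa 2 n = rr 0 n := by simpa using aa_even 0 n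
  have h3 : PowerSeries.coeff n (Tser 1) = bb n 1 := by simp [Tser]
  rw [h3, h2] at h
  rw [h, rr0_df]

/-- The tail, from the bottom, of the `N`-th convergent of the continued fraction
`1/(1 − x/(1 − 2x/(1 − 3x/(⋯ 1 − Nx))))` with `c_k = kx`:
`cfTail N 0 = 1` and `cfTail N (j+1) = (1 − (N−j)x · cfTail N j)⁻¹`,
so that `cfTail N N` is the `N`-th convergent `C_N(x)`. -/
noncomputable def cfTail (N : ℕ) : ℕ → PowerSeries ℝ
  | 0 => 1
  | j + 1 => (1 - ((N - j : ℕ) : ℝ) • PowerSeries.X * cfTail N j)⁻¹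


lemma cfTail_coeff : ∀ j N : ℕ, j ≤ N → ∀ n, n ≤ j →
    PowerSeries.coeff n (cfTail N j) = bb n (N - j + 1) := by
  intro j
  induction j with
  | zero =>
    intro N _ n hn
    interval_cases n
    simp [cfTail, bb_zero]
  | succ j ihj =>
    intro N hN n hn
    have hjN : j ≤ N := by omega
    have hcfT : cfTail N (j+1)
        = (1 - PowerSeries.C ((N - j : ℕ) : ℝ) * PowerSeries.X * cfTail N j)⁻¹ := by
      rw [cfTail, PowerSeries.smul_eq_C_mul]
    set c : ℝ := ((N - j : ℕ) : ℝ) with hc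
    set g := cfTail N j with hg
    set u : PowerSeries ℝ := 1 - PowerSeries.C c * PowerSeries.X * g with hu
    have hconst : PowerSeries.constantCoeff u = 1 := by
      simp [hu]
    have hmul : u * u⁻¹ = 1 := PowerSeries.mul_inv_cancel u (by rw [hconst]; norm_num)
    have hrec : u⁻¹ = 1 + PowerSeries.C c * (PowerSeries.X * (g * u⁻¹)) := by
      rw [hu] at hmul ⊢
      linear_combination hmul
    have key : ∀ n, n ≤ j+1 → PowerSeries.coeff n u⁻¹ = bb n (N - j) := by
      intro n
      induction n using Nat.strong_induction_on with
      | _ n ihn =>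
        intro hn
        rcases n with _ | n
        · rw [PowerSeries.coeff_zero_eq_constantCoeff, PowerSeries.constantCoeff_inv, hconst,
            bb_zero]
          norm_num
        · rw [hrec, map_add, PowerSeries.coeff_C_mul, PowerSeries.coeff_succ_X_mul,
            PowerSeries.coeff_mul, Finset.Nat.sum_antidiagonal_eq_sum_range_succ_mk]
          have hsum : ∀ k ∈ Finset.range (n+1),
              PowerSeries.coeff k g * PowerSeries.coeff (n-k) u⁻¹
                = bb k (N - j + 1) * bb (n-k) (N - j) := by
            intro k hk
            simp only [Finset.mem_range] at hk
            rw [hg, ihj N hjN k (by omega), ihn (n-k) (by omega) (by omega)]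
          rw [Finset.sum_congr rfl hsum, bb_succ, PowerSeries.coeff_one]
          simp [hc]
    have hNj : N - (j+1) + 1 = N - j := by omega
    rw [hNj, hcfT]
    exact key n hn

/-- The generating function of the odd double factorials equals the continued
fraction `1/(1 − x/(1 − 2x/(1 − 3x/⋯)))`: for every `N`, the coefficients of the
`N`-th convergent `C_N` agree with `(2n−1)‼` for all `n ≤ N`. -/
theorem doubleFactorial_continued_fraction :
    ∀ N n : ℕ, n ≤ N →
      PowerSeries.coeff n (cfTail N N) = (Nat.doubleFactorial (2 * n - 1) : ℝ) := by
  intro N n hn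
  have h := cfTail_coeff N N le_rfl n hn
  rw [Nat.sub_self, zero_add, bb_one] at h
  exact h
end
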